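/- arXiv:0805.1889 — 5 statements merged into one kernel-verified Lean document; each statement's English description precedes it below -/
import Mathlib

section
/- If A is a pure subgroup of an Abelian p-group G and A has finite period (i.e., there is n with p^n·A = 0), then A is a direct summand of G (Kulikov's theorem). -/
/-- If `A ∩ pG = 0`, then `A` is a direct summand of `G`. -/
lemma split_lemma (p : ℕ) (hp : p.Prime) (G : Type) [AddCommGroup G] (A : AddSubgroup G)
    (h : ∀ a ∈ A, ∀ g : G, p • g = a → a = 0) :
    ∃ B : AddSubgroup G, IsCompl A B := by
  haveI : Fact p.Prime := ⟨hp⟩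
  set φ : G →+ G := AddMonoidHom.mk' (fun g : G => p • g) (fun a b => smul_add p a b) with hφ
  set PG : AddSubgroup G := φ.range with hPG
  haveI inst1 : Module (ZMod p) (G ⧸ PG) := QuotientAddGroup.zmodModule (fun x => ⟨x, rfl⟩)
  set π : G →+ G ⧸ PG := QuotientAddGroup.mk' PG with hπ
  obtain ⟨W, hW⟩ := (AddSubgroup.toZModSubmodule p (A.map π)).exists_isCompl
  set Wg : AddSubgroup (G ⧸ PG) := (AddSubgroup.toZModSubmodule p (M := G ⧸ PG)).symm W with hWg
  have hW' : IsCompl (A.map π) Wg := by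
    have := (AddSubgroup.toZModSubmodule p (M := G ⧸ PG)).symm.isCompl hW
    exact this
  refine ⟨Wg.comap π, isCompl_iff.2 ⟨?_, ?_⟩⟩
  · rw [AddSubgroup.disjoint_def]
    intro x hxA hxB
    have hx1 : π x ∈ A.map π := ⟨x, hxA, rfl⟩
    have hx2 : π x ∈ Wg := AddSubgroup.mem_comap.1 hxB
    have hx0 : π x = 0 := by
      have := hW'.inf_eq_bot ▸ (AddSubgroup.mem_inf.2 ⟨hx1, hx2⟩)
      exact (AddSubgroup.mem_bot).1 this
    have hxPG : x ∈ PG := (QuotientAddGroup.eq_zero_iff x).1 hx0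
    obtain ⟨g, hg⟩ := hxPG
    exact h x hxA g hg
  · rw [codisjoint_iff, eq_top_iff]
    intro g _
    have hmem : π g ∈ (A.map π) ⊔ Wg := by rw [hW'.sup_eq_top]; trivial
    obtain ⟨y, hy, z, hz, hyz⟩ := AddSubgroup.mem_sup.1 hmem
    obtain ⟨a, haA, ha⟩ := hy
    refine AddSubgroup.mem_sup.2 ⟨a, haA, g - a, ?_, by abel⟩
    refine AddSubgroup.mem_comap.2 ?_
    have : π (g - a) = z := by rw [map_sub, ha, ← hyz]; abel
    rw [this]; exact hz

/-- Kulikov's key induction: a pure subgroup annihilated by `p ^ n` is a direct summand. -/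
lemma kulikov_key (p : ℕ) (hp : p.Prime) :
    ∀ (n : ℕ) (G : Type) [AddCommGroup G] (A : AddSubgroup G),
      (∀ m : ℕ, ∀ a ∈ A, (∃ g : G, p ^ m • g = a) → ∃ b ∈ A, p ^ m • b = a) →
      (∀ a ∈ A, p ^ n • a = 0) →
      ∃ B : AddSubgroup G, IsCompl A B := by
  intro n
  induction n with
  | zero =>
    intro G _ A _ hbound
    have hA : A = ⊥ := by
      ext x
      simp only [AddSubgroup.mem_bot]
      constructor
      · intro hx; simpa using hbound x hx
      · rintro rfl; exact A.zero_mem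
    exact ⟨⊤, hA ▸ isCompl_bot_top⟩
  | succ n IH =>
    intro G _ A hpure hbound
    set φ : G →+ G := AddMonoidHom.mk' (fun g : G => p • g) (fun a b => smul_add p a b) with hφ
    set PG : AddSubgroup G := φ.range with hPG
    set PA : AddSubgroup ↥PG := (A.map φ).addSubgroupOf PG with hPA
    -- purity of PA in PG
    have pure' : ∀ m : ℕ, ∀ x ∈ PA, (∃ g : ↥PG, p ^ m • g = x) → ∃ b ∈ PA, p ^ m • b = x := by
      intro m x hx ⟨g, hg⟩
      obtain ⟨a₀, ha₀A, ha₀⟩ := (AddSubgroup.mem_addSubgroupOf).1 hx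
      have hxA : (x : G) ∈ A := by rw [← ha₀]; exact AddSubgroup.nsmul_mem A ha₀A p
      obtain ⟨g', hg'⟩ := g.2
      have hxe : (x : G) = p ^ (m + 1) • g' := by
        have h1 : ((p ^ m • g : ↥PG) : G) = p ^ m • (g : G) := rfl
        have h2 : (x : G) = p ^ m • (g : G) := by rw [← hg]; rfl
        rw [h2, ← hg']
        show p ^ m • (p • g') = p ^ (m + 1) • g'
        rw [pow_succ, mul_smul]
      obtain ⟨b, hbA, hb⟩ := hpure (m + 1) (x : G) hxA ⟨g', hxe.symm⟩
      refine ⟨⟨p • b, ⟨b, rfl⟩⟩, ?_, ?_⟩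
      · exact (AddSubgroup.mem_addSubgroupOf).2 ⟨b, hbA, rfl⟩
      · apply Subtype.ext
        show p ^ m • (p • b) = (x : G)
        rw [← mul_smul, ← pow_succ]
        exact hb
    -- boundedness of PA
    have bound' : ∀ x ∈ PA, p ^ n • x = 0 := by
      intro x hx
      obtain ⟨a₀, ha₀A, ha₀⟩ := (AddSubgroup.mem_addSubgroupOf).1 hx
      apply Subtype.ext
      show p ^ n • (x : G) = 0
      have : (x : G) = p • a₀ := ha₀.symm
      rw [this, ← mul_smul, ← pow_succ]
      exact hbound a₀ ha₀A
    obtain ⟨C, hC⟩ := IH ↥PG PA pure' bound'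
    set Cimg : AddSubgroup G := C.map PG.subtype with hCimg
    set H : AddSubgroup G := Cimg.comap φ with hH
    set T : AddSubgroup ↥H := (A ⊓ H).addSubgroupOf H with hT
    -- the splitting hypothesis for T inside H
    have hsplit : ∀ t ∈ T, ∀ h' : ↥H, p • h' = t → t = 0 := by
      intro t ht h' hh'
      have htAH : (t : G) ∈ A ⊓ H := (AddSubgroup.mem_addSubgroupOf).1 ht
      have htA : (t : G) ∈ A := htAH.1
      have hth : p • (h' : G) = (t : G) := by rw [← hh']; rfl
      have htC : (t : G) ∈ Cimg := by
        have h3 : φ (h' : G) ∈ Cimg := AddSubgroup.mem_comap.1 h'.2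
        rwa [show φ (h' : G) = (t : G) from hth] at h3
      -- t ∈ A ∩ pG = pA
      have htPG : (t : G) ∈ PG := ⟨(h' : G), hth⟩
      obtain ⟨b, hbA, hb⟩ := hpure 1 (t : G) htA ⟨(h' : G), by rw [pow_one]; exact hth⟩
      have htmap : (t : G) ∈ A.map φ := ⟨b, hbA, by rw [← hb, pow_one]; rfl⟩
      set u : ↥PG := ⟨(t : G), htPG⟩ with hu
      have huPA : u ∈ PA := (AddSubgroup.mem_addSubgroupOf).2 htmap
      have huC : u ∈ C := by
        obtain ⟨c, hcC, hc⟩ := htC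
        have : c = u := Subtype.ext hc
        rwa [this] at hcC
      have hu0 : u = 0 := (AddSubgroup.disjoint_def).1 hC.disjoint huPA huC
      have hcoe : (t : G) = 0 := congrArg Subtype.val hu0
      exact Subtype.ext hcoe
    obtain ⟨B', hB'⟩ := split_lemma p hp ↥H T hsplit
    refine ⟨B'.map H.subtype, isCompl_iff.2 ⟨?_, ?_⟩⟩
    · rw [AddSubgroup.disjoint_def]
      intro x hxA hxB
      obtain ⟨b, hbB', hb⟩ := hxB
      have hbT : b ∈ T := by
        refine (AddSubgroup.mem_addSubgroupOf).2 ?_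
        exact ⟨by rw [show ((b : G)) = x from hb]; exact hxA, b.2⟩
      have : b = 0 := (AddSubgroup.disjoint_def).1 hB'.disjoint hbT hbB'
      rw [← hb, this]; rfl
    · rw [codisjoint_iff, eq_top_iff]
      intro g _
      set u : ↥PG := ⟨p • g, ⟨g, rfl⟩⟩ with hu
      have hmem : u ∈ PA ⊔ C := by rw [hC.sup_eq_top]; trivial
      obtain ⟨y, hy, z, hz, hyz⟩ := AddSubgroup.mem_sup.1 hmem
      obtain ⟨a, haA, ha⟩ := (AddSubgroup.mem_addSubgroupOf).1 hy
      have hzcoe : p • (g - a) = (z : G) := by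
        have h1 : (y : G) + (z : G) = p • g := congrArg Subtype.val hyz
        have h2 : (y : G) = p • a := ha.symm
        rw [smul_sub]
        rw [h2] at h1
        rw [← h1]; abel
      have hgaH : g - a ∈ H := by
        refine AddSubgroup.mem_comap.2 ?_
        show φ (g - a) ∈ Cimg
        rw [show φ (g - a) = p • (g - a) from rfl, hzcoe]
        exact ⟨z, hz, rfl⟩
      set h' : ↥H := ⟨g - a, hgaH⟩ with hh'
      have hmem2 : h' ∈ T ⊔ B' := by rw [hB'.sup_eq_top]; trivial
      obtain ⟨t, htT, b, hbB', htb⟩ := AddSubgroup.mem_sup.1 hmem2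
      have htAH : (t : G) ∈ A ⊓ H := (AddSubgroup.mem_addSubgroupOf).1 htT
      refine AddSubgroup.mem_sup.2 ⟨a + (t : G), A.add_mem haA htAH.1, (b : G), ⟨b, hbB', rfl⟩, ?_⟩
      have : (t : G) + (b : G) = g - a := congrArg Subtype.val htb
      rw [add_assoc, this]; abel

/-- Kulikov: a pure subgroup of finite period of an Abelian p-group is a
direct summand. -/
theorem stmt_1 (p : ℕ) (hp : p.Prime) (G : Type) [AddCommGroup G]
    (hG : ∀ g : G, ∃ n : ℕ, addOrderOf g = p ^ n)
    (A : AddSubgroup G)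
    (hpure : ∀ n : ℕ, ∀ a ∈ A, (∃ g : G, p ^ n • g = a) → ∃ b ∈ A, p ^ n • b = a)
    (hper : ∃ n : ℕ, ∀ a ∈ A, p ^ n • a = 0) :
    ∃ B : AddSubgroup G, IsCompl A B := by
  obtain ⟨n, hn⟩ := hper
  exact kulikov_key p hp n G A hpure hn
end

section
/- A countable Abelian p-group G is a direct sum of cyclic groups if and only if every nonzero element of G has finite height (Prüfer's theorem). -/
open scoped Pointwise

private lemma zmod_ann_mul {n : ℕ} [NeZero n] (a c : ZMod n)
    (h : ∀ r : ZMod n, r * a = 0 → r * c = 0) : ∃ d : ZMod n, c = d * a := by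
  have hn : n ≠ 0 := NeZero.ne n
  set g := Nat.gcd n a.val with hg
  have hgdvdn : g ∣ n := Nat.gcd_dvd_left _ _
  have hgdvda : g ∣ a.val := Nat.gcd_dvd_right _ _
  have hgpos : 0 < g := Nat.gcd_pos_of_pos_left _ (Nat.pos_of_ne_zero hn)
  set k := n / g with hk
  have hkg : g * k = n := Nat.mul_div_cancel' hgdvdn
  have hka : (k : ZMod n) * a = 0 := by
    have : ((k * a.val : ℕ) : ZMod n) = 0 := by
      rw [ZMod.natCast_eq_zero_iff]
      obtain ⟨e, he⟩ := hgdvda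
      exact ⟨e, by rw [he, ← hkg]; ring⟩
    rw [Nat.cast_mul, ZMod.natCast_val, ZMod.cast_id] at this
    exact this
  have hkc : (k : ZMod n) * c = 0 := h _ hka
  have hdvd : g ∣ c.val := by
    have : ((k * c.val : ℕ) : ZMod n) = 0 := by
      rw [Nat.cast_mul, ZMod.natCast_val, ZMod.cast_id]; exact hkc
    rw [ZMod.natCast_eq_zero_iff] at this
    obtain ⟨e, he⟩ := this
    have hkpos : 0 < k := by
      rcases Nat.eq_zero_or_pos k with h0 | h0
      · exfalso; rw [h0, mul_zero] at hkg; exact hn hkg.symm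
      · exact h0
    have : k * c.val = k * (g * e) := by rw [he, ← hkg]; ring
    exact ⟨e, Nat.eq_of_mul_eq_mul_left hkpos this⟩
  -- Bezout: g ≡ a * y mod n
  have hbez : (g : ZMod n) = a * ((Nat.gcdB n a.val : ℤ) : ZMod n) := by
    have := Nat.gcd_eq_gcd_ab n a.val
    calc (g : ZMod n) = ((g : ℤ) : ZMod n) := by push_cast; ring
    _ = ((n * Nat.gcdA n a.val + a.val * Nat.gcdB n a.val : ℤ) : ZMod n) := by rw [← this]
    _ = a * ((Nat.gcdB n a.val : ℤ) : ZMod n) := by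
        push_cast
        rw [ZMod.natCast_self, ZMod.natCast_val, ZMod.cast_id]
        ring
  obtain ⟨e, he⟩ := hdvd
  refine ⟨e * ((Nat.gcdB n a.val : ℤ) : ZMod n), ?_⟩
  calc c = ((c.val : ℕ) : ZMod n) := by rw [ZMod.natCast_val, ZMod.cast_id]
  _ = ((g * e : ℕ) : ZMod n) := by rw [← he]
  _ = (g : ZMod n) * e := by push_cast; ring
  _ = e * ((Nat.gcdB n a.val : ℤ) : ZMod n) * a := by rw [hbez]; ring

private lemma baer_zmod (n : ℕ) [NeZero n] : Module.Baer (ZMod n) (ZMod n) := by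
  intro I g
  haveI : IsPrincipalIdealRing (ZMod n) :=
    IsPrincipalIdealRing.of_surjective (Int.castRingHom (ZMod n)) ZMod.intCast_surjective
  obtain ⟨a, ha⟩ := (IsPrincipalIdealRing.principal I).principal
  have hmem : a ∈ I := by rw [ha]; exact Submodule.mem_span_singleton_self a
  have key : ∀ r : ZMod n, r * a = 0 → r * g ⟨a, hmem⟩ = 0 := by
    intro r hr
    have : (r • (⟨a, hmem⟩ : I)) = 0 := by
      ext; simpa [smul_eq_mul] using hr
    have := congrArg g this
    rwa [map_smul, map_zero, smul_eq_mul] at this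
  obtain ⟨d, hd⟩ := zmod_ann_mul a (g ⟨a, hmem⟩) key
  refine ⟨LinearMap.toSpanSingleton (ZMod n) (ZMod n) d, ?_⟩
  intro x mem
  have hx : x ∈ Submodule.span (ZMod n) {a} := ha ▸ mem
  rw [show Submodule.span (ZMod n) ({a} : Set (ZMod n)) = Ideal.span {a} from rfl] at hx
  obtain ⟨s, hs⟩ := Ideal.mem_span_singleton'.mp hx
  have hxa : (⟨x, mem⟩ : I) = s • ⟨a, hmem⟩ := by
    ext; simp [smul_eq_mul, hs]
  rw [hxa, map_smul, hd, LinearMap.toSpanSingleton_apply, smul_eq_mul, smul_eq_mul, ← hs]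
  ring

private lemma split_cyclic (n : ℕ) [NeZero n] (G : Type) [AddCommGroup G] [Module (ZMod n) G]
    (b : G) (hb : ∀ t : ZMod n, t • b = 0 → t = 0) : ∃ f : G →+ ZMod n, f b = 1 := by
  have hinj : Function.Injective (LinearMap.toSpanSingleton (ZMod n) G b) := by
    intro s t hst
    simp only [LinearMap.toSpanSingleton_apply] at hst
    have : (s - t) • b = 0 := by rw [sub_smul, hst, sub_self]
    have := hb _ this
    rwa [sub_eq_zero] at this
  obtain ⟨h, hh⟩ := Module.Baer.extension_property (baer_zmod n) _ hinj
    (LinearMap.id : ZMod n →ₗ[ZMod n] ZMod n)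
  refine ⟨h.toAddMonoidHom, ?_⟩
  have := congrArg (fun φ : ZMod n →ₗ[ZMod n] ZMod n => φ 1) hh
  simpa [LinearMap.toSpanSingleton_apply] using this

private lemma cyclic_summand (p : ℕ) (hp : p.Prime) (G : Type) [AddCommGroup G]
    (hht : ∀ g : G, g ≠ 0 → ∃ n : ℕ, ¬ ∃ x : G, p ^ n • x = g)
    (k' : G) (hk1 : k' ≠ 0) (hk2 : p • k' = 0) :
    ∃ (C : AddSubgroup G) (r : G →+ G), Finite C ∧ k' ∈ C ∧ (∀ x, r x ∈ C) ∧ ∀ c ∈ C, r c = c := by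
  classical
  obtain ⟨N, hN⟩ := hht k' hk1
  set P : ℕ → Prop := fun n => ∃ x : G, p ^ n • x = k' with hPdef
  have hP0 : P 0 := ⟨k', by simp⟩
  have hdown : ∀ {m m' : ℕ}, m' ≤ m → P m → P m' := by
    rintro m m' hle ⟨x, hx⟩
    refine ⟨p ^ (m - m') • x, ?_⟩
    rw [← mul_smul, ← pow_add]
    rwa [show m' + (m - m') = m by omega]
  set h := Nat.findGreatest P N with hdefh
  have hPh : P h := Nat.findGreatest_spec (Nat.zero_le N) hP0
  have hnot : ¬ P (h + 1) := by
    by_cases hle : h + 1 ≤ N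
    · exact Nat.findGreatest_is_greatest (Nat.lt_succ_self _) hle
    · exact fun hcon => hN (hdown (by omega) hcon)
  obtain ⟨b, hb⟩ := hPh
  set m := h + 1 with hmdef
  have hmb : p ^ m • b = 0 := by
    rw [hmdef, pow_succ', mul_smul, hb, hk2]
  have hpm1 : 1 < p ^ m := Nat.one_lt_pow (by omega) hp.one_lt
  have hpure : ∀ t : ℤ, (∃ x : G, p ^ m • x = t • b) → t • b = 0 := by
    rintro t ⟨x, hx⟩
    by_contra hne
    set t' : ℕ := (t % (p ^ m : ℤ)).toNat with ht'def
    have hpmpos : (0 : ℤ) < (p ^ m : ℤ) := pow_pos (by exact_mod_cast hp.pos) m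
    have htt' : (t' : ℤ) = t % (p ^ m : ℤ) := Int.toNat_of_nonneg (Int.emod_nonneg _ hpmpos.ne')
    have hsmul : t' • b = t • b := by
      have hdvd : ((p : ℤ) ^ m) ∣ (t - t') := by
        rw [htt', Int.emod_def]
        push_cast
        exact ⟨t / (p:ℤ) ^ m, by ring⟩
      obtain ⟨q, hq⟩ := hdvd
      have hz : t • b - (t' : ℤ) • b = 0 := by
        rw [← sub_smul, hq, mul_comm, mul_smul]
        have hpmz : ((p : ℤ) ^ m) • b = 0 := by
          rw [show ((p:ℤ)^m) = ((p^m : ℕ) : ℤ) by push_cast; ring, natCast_zsmul, hmb]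
        rw [hpmz, smul_zero]
      have h2 : (t' : ℤ) • b = t • b := (sub_eq_zero.mp hz).symm
      rw [← h2, natCast_zsmul]
    have ht'ne : t' ≠ 0 := by
      intro h0
      rw [← hsmul, h0, zero_smul] at hne
      exact hne rfl
    set j := t'.factorization p with hjdef
    set u := t' / p ^ j with hudef
    have hju : p ^ j * u = t' := Nat.ordProj_mul_ordCompl_eq_self t' p
    have hundvd : ¬ p ∣ u := Nat.not_dvd_ordCompl hp ht'ne
    have hjle : j ≤ h := by
      have h1 : p ^ j ∣ t' := Nat.ordProj_dvd _ _
      have h2 : t' < p ^ m := by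
        have hcast : ((p ^ m : ℕ) : ℤ) = (p : ℤ) ^ m := by push_cast; ring
        have h2' : (t' : ℤ) < ((p ^ m : ℕ) : ℤ) := by
          rw [htt', hcast]; exact Int.emod_lt_of_pos t hpmpos
        exact_mod_cast h2'
      have h3 := Nat.le_of_dvd (Nat.pos_of_ne_zero ht'ne) h1
      have h4 : p ^ j < p ^ m := lt_of_le_of_lt h3 h2
      have := (Nat.pow_lt_pow_iff_right hp.one_lt).mp h4
      omega
    have hcop : Nat.Coprime u (p ^ m) :=
      Nat.Coprime.pow_right m (Nat.coprime_comm.mp ((hp.coprime_iff_not_dvd).mpr hundvd))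
    obtain ⟨u', -, hu'⟩ := Nat.exists_mul_mod_eq_one_of_coprime hcop hpm1
    have huu' : (u * u') • b = b := by
      have hdecomp : u * u' = p ^ m * (u * u' / p ^ m) + 1 := by
        conv_lhs => rw [← Nat.div_add_mod (u * u') (p ^ m)]
        rw [hu']
      rw [hdecomp, add_nsmul, one_nsmul, mul_comm (p ^ m), mul_smul, hmb, smul_zero, zero_add]
    have hpj : p ^ j • b = p ^ m • (u' • x) := by
      calc p ^ j • b = p ^ j • ((u * u') • b) := by rw [huu']
        _ = (p ^ j * (u * u')) • b := by simp [mul_smul]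
        _ = (u' * (p ^ j * u)) • b := by rw [show p ^ j * (u * u') = u' * (p ^ j * u) by ring]
        _ = u' • (t' • b) := by rw [hju, mul_smul]
        _ = u' • (t • b) := by rw [hsmul]
        _ = u' • (p ^ m • x) := by rw [hx]
        _ = p ^ m • (u' • x) := smul_comm _ _ _
    apply hnot
    refine ⟨p ^ (h - j) • (u' • x), ?_⟩
    calc p ^ (h + 1) • (p ^ (h - j) • (u' • x))
        = p ^ (h - j) • (p ^ m • (u' • x)) := by rw [smul_comm, hmdef]
      _ = p ^ (h - j) • (p ^ j • b) := by rw [← hpj]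
      _ = (p ^ (h - j) * p ^ j) • b := by rw [mul_smul]
      _ = p ^ h • b := by rw [← pow_add, show h - j + j = h by omega]
      _ = k' := hb
  have hordb : addOrderOf b = p ^ m := by
    have hdvd : addOrderOf b ∣ p ^ m := addOrderOf_dvd_iff_nsmul_eq_zero.mpr hmb
    obtain ⟨i, hile, hi⟩ := (Nat.dvd_prime_pow hp).mp hdvd
    have hih : ¬ i ≤ h := by
      intro hih
      apply hk1
      have hdvd2 : addOrderOf b ∣ p ^ h := hi ▸ pow_dvd_pow p hih
      have hzz := addOrderOf_dvd_iff_nsmul_eq_zero.mp hdvd2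
      rw [← hb, hzz]
    rw [hi]
    congr 1
    omega
  set φ : G →+ G :=
    { toFun := fun x => p ^ m • x
      map_zero' := smul_zero _
      map_add' := fun a b => smul_add _ a b } with hφdef
  set B := φ.range with hBdef
  haveI : NeZero (p ^ m) := ⟨by positivity⟩
  letI : Module (ZMod (p ^ m)) (G ⧸ B) := QuotientAddGroup.zmodModule (fun x => ⟨x, rfl⟩)
  set π := QuotientAddGroup.mk' B with hπdef
  have hval : ∀ t : ZMod (p ^ m), ((t.val : ℕ) : ZMod (p ^ m)) = t := fun t => by
    rw [ZMod.natCast_val, ZMod.cast_id]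
  have hsmul_nat : ∀ (c : ℕ) (y : G), ((c : ZMod (p ^ m)) • π y) = π (c • y) := by
    intro c y
    rw [show ((c : ZMod (p ^ m))) = (((c : ℤ) : ZMod (p ^ m))) by push_cast; rfl,
      Int.cast_smul_eq_zsmul, natCast_zsmul, ← map_nsmul]
  have hbq : ∀ t : ZMod (p ^ m), t • (π b) = 0 → t = 0 := by
    intro t ht
    rw [← hval t, hsmul_nat] at ht
    have hmem : t.val • b ∈ B := by
      rw [← QuotientAddGroup.eq_zero_iff]
      exact ht
    obtain ⟨x, hx⟩ := hmem
    have hz : (t.val : ℤ) • b = 0 := by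
      apply hpure
      exact ⟨x, by rw [natCast_zsmul]; exact hx⟩
    rw [natCast_zsmul] at hz
    have hdvd : p ^ m ∣ t.val := by
      have hdd := addOrderOf_dvd_iff_nsmul_eq_zero.mpr hz
      rwa [hordb] at hdd
    have hlt : t.val < p ^ m := ZMod.val_lt t
    have hv0 : t.val = 0 := Nat.eq_zero_of_dvd_of_lt hdvd hlt
    have hvt := hval t
    rw [hv0] at hvt
    simpa using hvt.symm
  obtain ⟨f0, hf0⟩ := split_cyclic (p ^ m) (G ⧸ B) (π b) hbq
  have hψcond : (zmultiplesHom G b) ((p ^ m : ℕ) : ℤ) = 0 := by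
    simp only [zmultiplesHom_apply, natCast_zsmul]
    exact hmb
  set ψ : ZMod (p ^ m) →+ G := ZMod.lift (p ^ m) ⟨zmultiplesHom G b, hψcond⟩ with hψdef
  have hψz : ∀ z : ℤ, ψ ((z : ℤ) : ZMod (p ^ m)) = z • b := by
    intro z
    rw [hψdef, ZMod.lift_coe]
    simp [zmultiplesHom_apply]
  set r := ψ.comp (f0.comp π) with hrdef
  have hrb : r b = b := by
    rw [hrdef]
    simp only [AddMonoidHom.comp_apply]
    rw [show (π b) = (QuotientAddGroup.mk' B) b from rfl, hf0,
      show (1 : ZMod (p ^ m)) = (((1:ℤ) : ZMod (p ^ m))) by push_cast; rfl, hψz, one_smul]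
  refine ⟨AddSubgroup.zmultiples b, r, ?_, ?_, ?_, ?_⟩
  · have hfin : IsOfFinAddOrder b := by
      rw [← addOrderOf_pos_iff, hordb]
      positivity
    exact hfin.finite_zmultiples
  · exact AddSubgroup.mem_zmultiples_iff.mpr ⟨(p ^ h : ℤ), by
      rw [show ((p ^ h : ℤ)) = ((p ^ h : ℕ) : ℤ) by push_cast; ring, natCast_zsmul]; exact hb⟩
  · intro x
    rw [hrdef]
    simp only [AddMonoidHom.comp_apply]
    obtain ⟨z, hz⟩ := ZMod.intCast_surjective (f0 (π x))
    rw [← hz, hψz]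
    exact AddSubgroup.mem_zmultiples_iff.mpr ⟨z, rfl⟩
  · intro c hc
    obtain ⟨z, hz⟩ := AddSubgroup.mem_zmultiples_iff.mp hc
    rw [← hz, map_zsmul, hrb]

private lemma comb (G : Type) [AddCommGroup G] (r : G →+ G) (C : AddSubgroup G)
    (hr1 : ∀ x, r x ∈ C) (hr2 : ∀ c ∈ C, r c = c)
    (C'' : AddSubgroup r.ker) (r'' : r.ker →+ r.ker)
    (h1 : ∀ x, r'' x ∈ C'') (h2 : ∀ c ∈ C'', r'' c = c) :
    ∃ (C' : AddSubgroup G) (r' : G →+ G),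
      (∀ x, r' x ∈ C') ∧ (∀ c ∈ C', r' c = c) ∧ C ≤ C' ∧ C''.map r.ker.subtype ≤ C' ∧
      (Finite C → Finite C'' → Finite C') ∧ r'.comp r = r ∧ r.comp r' = r := by
  classical
  have hrr : ∀ x, r (r x) = r x := fun x => hr2 _ (hr1 x)
  set π : G →+ r.ker :=
    { toFun := fun x => ⟨x - r x, by simp [AddMonoidHom.mem_ker, map_sub, hrr]⟩
      map_zero' := by ext; simp
      map_add' := by intro a b; ext; simp; abel } with hπdef
  set ι := r.ker.subtype with hιdef
  set r' := r + ι.comp (r''.comp π) with hr'def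
  have hr'x : ∀ x, r' x = r x + ↑(r'' (π x)) := fun x => rfl
  set C' := C ⊔ C''.map ι with hC'def
  have hπC : ∀ c ∈ C, π c = 0 := by
    intro c hc; ext; simp [hπdef, hr2 c hc]
  have hfix : ∀ c ∈ C', r' c = c := by
    intro c hc
    rw [hC'def, AddSubgroup.mem_sup] at hc
    obtain ⟨y, hy, z, hz, rfl⟩ := hc
    rw [map_add]
    have hy' : r' y = y := by
      rw [hr'x, hπC y hy, map_zero, hr2 y hy]
      simp
    have hz' : r' z = z := by
      obtain ⟨d, hd, rfl⟩ := hz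
      have hzker : r (ι d) = 0 := d.2
      have hzker' : r (d : G) = 0 := d.2
      have hπz : π (ι d) = d := by
        ext
        show (ι d) - r (ι d) = ↑d
        rw [hzker, sub_zero]
        rfl
      rw [hr'x]
      show r (ι d) + _ = _
      rw [hzker, hπz, h2 d hd, zero_add]
      rfl
    rw [hy', hz']
  refine ⟨C', r', ?_, hfix, le_sup_left, le_sup_right, ?_, ?_, ?_⟩
  pick_goal 1
  · intro x
    rw [hr'x]
    exact AddSubgroup.add_mem _ (AddSubgroup.mem_sup_left (hr1 x))
      (AddSubgroup.mem_sup_right (AddSubgroup.mem_map_of_mem ι (h1 (π x))))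
  · intro hC hC''
    have hCs : (C : Set G).Finite := Set.finite_coe_iff.mp hC
    have hDs : ((C''.map ι : AddSubgroup G) : Set G).Finite := by
      rw [AddSubgroup.coe_map]
      exact (Set.finite_coe_iff.mp hC'').image _
    have hsub : ((C' : AddSubgroup G) : Set G) ⊆ (C : Set G) + ((C''.map ι : AddSubgroup G) : Set G) := by
      intro x hx
      obtain ⟨y, hy, z, hz, rfl⟩ := AddSubgroup.mem_sup.mp hx
      exact Set.add_mem_add hy hz
    exact Set.finite_coe_iff.mpr (Set.Finite.subset (hCs.add hDs) hsub)
  · ext x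
    simp only [AddMonoidHom.comp_apply, hr'x]
    have : π (r x) = 0 := hπC _ (hr1 x)
    rw [this, map_zero, hrr]
    simp
  · ext x
    simp only [AddMonoidHom.comp_apply, hr'x, map_add]
    have h0 : r ((r'' (π x) : r.ker) : G) = 0 := (r'' (π x)).2
    rw [h0, hrr, add_zero]

private lemma lemC (p : ℕ) (hp : p.Prime) :
    ∀ (e : ℕ) (G : Type) (_ : AddCommGroup G),
      (∀ g : G, g ≠ 0 → ∃ n : ℕ, ¬ ∃ x : G, p ^ n • x = g) →
      ∀ k : G, addOrderOf k ∣ p ^ e →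
      ∃ (C : AddSubgroup G) (r : G →+ G), Finite C ∧ k ∈ C ∧ (∀ x, r x ∈ C) ∧ ∀ c ∈ C, r c = c := by
  intro e
  induction e with
  | zero =>
    intro G _ hht k hk
    have h1 : addOrderOf k = 1 := Nat.dvd_one.mp (by simpa using hk)
    have hk0 : k = 0 := AddMonoid.addOrderOf_eq_one_iff.mp h1
    refine ⟨⊥, 0, ?_, by simp [hk0], fun x => by simp, fun c hc => ?_⟩
    · infer_instance
    · rw [AddSubgroup.mem_bot] at hc
      simp [hc]
  | succ e ih =>
    intro G _ hht k hk
    by_cases h0 : p ^ e • k = 0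
    · exact ih G _ hht k (addOrderOf_dvd_iff_nsmul_eq_zero.mpr h0)
    · set k' := p ^ e • k with hk'def
      have hk1 : k' ≠ 0 := h0
      have hk2 : p • k' = 0 := by
        rw [hk'def, ← mul_smul, ← pow_succ']
        exact addOrderOf_dvd_iff_nsmul_eq_zero.mp hk
      obtain ⟨C, r, hCfin, hk'C, hr1, hr2⟩ := cyclic_summand p hp G hht k' hk1 hk2
      have hrr : ∀ x, r (r x) = r x := fun x => hr2 _ (hr1 x)
      have hkmem : k - r k ∈ r.ker := by simp [AddMonoidHom.mem_ker, map_sub, hrr]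
      set kk : r.ker := ⟨k - r k, hkmem⟩ with hkkdef
      have hkk : addOrderOf kk ∣ p ^ e := by
        rw [addOrderOf_dvd_iff_nsmul_eq_zero]
        have hsm : p ^ e • (k - r k) = 0 := by
          rw [smul_sub, ← map_nsmul, ← hk'def, hr2 k' hk'C, sub_self]
        exact Subtype.ext (by simpa using hsm)
      have hht'' : ∀ g : r.ker, g ≠ 0 → ∃ n : ℕ, ¬ ∃ x : r.ker, p ^ n • x = g := by
        intro g hg
        obtain ⟨n, hn⟩ := hht ↑g (fun hcoe => hg (Subtype.ext (by simpa using hcoe)))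
        refine ⟨n, ?_⟩
        rintro ⟨x, hx⟩
        exact hn ⟨↑x, by rw [← congrArg (Subtype.val) hx]; simp⟩
      obtain ⟨C'', r'', hC''fin, hkkC'', h1, h2⟩ := ih r.ker _ hht'' kk hkk
      obtain ⟨C', r', ha, hb', hc, hd, he, _, _⟩ := comb G r C hr1 hr2 C'' r'' h1 h2
      refine ⟨C', r', he hCfin hC''fin, ?_, ha, hb'⟩
      have hksum : k = r k + ↑kk := by
        rw [hkkdef]
        simp
      rw [hksum]
      exact C'.add_mem (hc (hr1 k)) (hd (AddSubgroup.mem_map_of_mem _ hkkC''))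

private lemma global_equiv (p : ℕ) (hp : p.Prime) (G : Type) [AddCommGroup G] [Countable G]
    (hG : ∀ g : G, ∃ n : ℕ, addOrderOf g = p ^ n)
    (hht : ∀ g : G, g ≠ 0 → ∃ n : ℕ, ¬ ∃ x : G, p ^ n • x = g) :
    ∃ Q : ℕ → AddSubgroup G, (∀ n, Finite (Q n)) ∧
      Nonempty (G ≃+ DirectSum ℕ fun n => Q n) := by
  classical
  obtain ⟨gseq, hgseq⟩ := exists_surjective_nat G
  -- step existence
  have step : ∀ (g : G) (c : AddSubgroup G) (r : G →+ G), Finite c → (∀ x, r x ∈ c) →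
      (∀ y ∈ c, r y = y) →
      ∃ (c' : AddSubgroup G) (r' : G →+ G), Finite c' ∧ (∀ x, r' x ∈ c') ∧ (∀ y ∈ c', r' y = y) ∧
        c ≤ c' ∧ g ∈ c' ∧ r'.comp r = r ∧ r.comp r' = r := by
    intro g c r hfin hr1 hr2
    have hrr : ∀ x, r (r x) = r x := fun x => hr2 _ (hr1 x)
    have hkmem : g - r g ∈ r.ker := by simp [AddMonoidHom.mem_ker, map_sub, hrr]
    set kk : r.ker := ⟨g - r g, hkmem⟩ with hkkdef
    obtain ⟨e, he⟩ := hG g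
    have hge : p ^ e • g = 0 := by
      rw [← he]
      exact addOrderOf_nsmul_eq_zero g
    have hkk : addOrderOf kk ∣ p ^ e := by
      rw [addOrderOf_dvd_iff_nsmul_eq_zero]
      have hsm : p ^ e • (g - r g) = 0 := by
        rw [smul_sub, ← map_nsmul, hge, map_zero, sub_zero]
      exact Subtype.ext (by simpa using hsm)
    have hht'' : ∀ g' : r.ker, g' ≠ 0 → ∃ n : ℕ, ¬ ∃ x : r.ker, p ^ n • x = g' := by
      intro g' hg'
      obtain ⟨n, hn⟩ := hht ↑g' (fun hcoe => hg' (Subtype.ext (by simpa using hcoe)))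
      refine ⟨n, ?_⟩
      rintro ⟨x, hx⟩
      exact hn ⟨↑x, by rw [← congrArg (Subtype.val) hx]; simp⟩
    obtain ⟨C'', r'', hC''fin, hkkC'', h1, h2⟩ := lemC p hp e r.ker _ hht'' kk hkk
    obtain ⟨C', r', ha, hb', hc, hd, hfin', hcomp1, hcomp2⟩ := comb G r c hr1 hr2 C'' r'' h1 h2
    refine ⟨C', r', hfin' hfin hC''fin, ha, hb', hc, ?_, hcomp1, hcomp2⟩
    have hgsum : g = r g + ↑kk := by rw [hkkdef]; simp
    rw [hgsum]
    exact C'.add_mem (hc (hr1 g)) (hd (AddSubgroup.mem_map_of_mem _ hkkC''))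
  -- build the chain
  set Pair := {q : AddSubgroup G × (G →+ G) //
    Finite q.1 ∧ (∀ x, q.2 x ∈ q.1) ∧ ∀ y ∈ q.1, q.2 y = y} with hPair
  have good0 : Finite ((⊥ : AddSubgroup G)) ∧ (∀ x : G, (0 : G →+ G) x ∈ (⊥ : AddSubgroup G)) ∧
      ∀ y ∈ (⊥ : AddSubgroup G), (0 : G →+ G) y = y := by
    refine ⟨inferInstance, fun x => by simp, fun y hy => ?_⟩
    rw [AddSubgroup.mem_bot] at hy
    simp [hy]
  have step' : ∀ (g : G) (P : Pair), ∃ P' : Pair,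
      P.1.1 ≤ P'.1.1 ∧ g ∈ P'.1.1 ∧ P'.1.2.comp P.1.2 = P.1.2 ∧ P.1.2.comp P'.1.2 = P.1.2 := by
    rintro g ⟨⟨c, r⟩, hfin, hr1, hr2⟩
    obtain ⟨c', r', h1, h2, h3, h4, h5, h6, h7⟩ := step g c r hfin hr1 hr2
    exact ⟨⟨(c', r'), h1, h2, h3⟩, h4, h5, h6, h7⟩
  choose F hF1 hF2 hF3 hF4 using step'
  set seq : ℕ → Pair := fun n => Nat.rec ⟨(⊥, 0), good0⟩ (fun n Q => F (gseq n) Q) n with hseq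
  set C : ℕ → AddSubgroup G := fun n => (seq n).1.1 with hC
  set r : ℕ → (G →+ G) := fun n => (seq n).1.2 with hr
  have hseqs : ∀ n, seq (n + 1) = F (gseq n) (seq n) := fun n => rfl
  have hfin : ∀ n, Finite (C n) := fun n => (seq n).2.1
  have hr1 : ∀ n x, r n x ∈ C n := fun n => (seq n).2.2.1
  have hr2 : ∀ n, ∀ y ∈ C n, r n y = y := fun n => (seq n).2.2.2
  have hmono : ∀ n, C n ≤ C (n + 1) := fun n => hF1 (gseq n) (seq n)
  have hmem : ∀ n, gseq n ∈ C (n + 1) := fun n => hF2 (gseq n) (seq n)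
  have hcons1 : ∀ n x, r (n + 1) (r n x) = r n x := fun n x =>
    congrArg (fun φ : G →+ G => φ x) (hF3 (gseq n) (seq n))
  have hcons2 : ∀ n x, r n (r (n + 1) x) = r n x := fun n x =>
    congrArg (fun φ : G →+ G => φ x) (hF4 (gseq n) (seq n))
  have hmono' : ∀ m n, m ≤ n → C m ≤ C n := by
    intro m n hmn
    induction n with
    | zero =>
      rw [Nat.le_zero.mp hmn]
    | succ n ih =>
      rcases Nat.lt_or_ge m (n + 1) with hlt | hge
      · exact (ih (by omega)).trans (hmono n)
      · rw [show m = n + 1 by omega]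
  have hcomp2 : ∀ m n, m ≤ n → ∀ x, r n (r m x) = r m x :=
    fun m n hmn x => hr2 n _ (hmono' m n hmn (hr1 m x))
  have hcomp1 : ∀ m n, m ≤ n → ∀ x, r m (r n x) = r m x := by
    intro m n
    induction n with
    | zero =>
      intro hmn x
      rw [Nat.le_zero.mp hmn]
      exact hr2 0 _ (hr1 0 x)
    | succ n ih =>
      intro hmn x
      rcases Nat.lt_or_ge m (n + 1) with hlt | hge
      · have hmn' : m ≤ n := by omega
        calc r m (r (n + 1) x) = r m (r n (r (n + 1) x)) := (ih hmn' _).symm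
          _ = r m (r n x) := by rw [hcons2]
          _ = r m x := ih hmn' x
      · rw [show m = n + 1 by omega]
        exact hr2 (n + 1) _ (hr1 (n + 1) x)
  have hcover : ∀ x : G, ∃ N, ∀ k, N ≤ k → r k x = x := by
    intro x
    obtain ⟨i, rfl⟩ := hgseq x
    refine ⟨i + 1, fun k hk => ?_⟩
    have h1 : gseq i ∈ C k := hmono' (i + 1) k hk (hmem i)
    exact hr2 k _ h1
  -- the difference maps
  set q : ℕ → (G →+ G) := fun n => r (n + 1) - r n with hqdef
  have hq : ∀ n x, q n x = r (n + 1) x - r n x := fun n x => rfl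
  have hql : ∀ m n x, m ≠ n → q m (q n x) = 0 := by
    intro m n x hmn
    rcases Nat.lt_or_ge m n with hlt | hge
    · have e1 : m + 1 ≤ n := hlt
      simp only [hq, map_sub]
      rw [hcomp1 (m+1) (n+1) (by omega), hcomp1 (m+1) n e1,
        hcomp1 m (n+1) (by omega), hcomp1 m n (by omega)]
      abel
    · have e1 : n + 1 ≤ m := by omega
      simp only [hq, map_sub]
      rw [hcomp2 (n+1) (m+1) (by omega), hcomp2 (n+1) m e1,
        hcomp2 n (m+1) (by omega), hcomp2 n m (by omega)]
      abel
  have hqidem : ∀ n x, q n (q n x) = q n x := by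
    intro n x
    simp only [hq, map_sub]
    rw [hcomp2 n (n+1) (by omega), hr2 (n+1) _ (hr1 (n+1) x),
      hcons2 n x, hr2 n _ (hr1 n x)]
    abel
  set Q : ℕ → AddSubgroup G := fun n => (q n).range with hQdef
  have hQfin : ∀ n, Finite (Q n) := by
    intro n
    have hle : Q n ≤ C (n + 1) := by
      rintro y ⟨x, rfl⟩
      exact AddSubgroup.sub_mem _ (hr1 (n+1) x) (hmono n (hr1 n x))
    have : ((Q n : AddSubgroup G) : Set G).Finite :=
      Set.Finite.subset (Set.finite_coe_iff.mp (hfin (n+1))) hle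
    exact Set.finite_coe_iff.mpr this
  refine ⟨Q, hQfin, ?_⟩
  set Ψ : (DirectSum ℕ fun n => Q n) →+ G := DirectSum.toAddMonoid (fun n => (Q n).subtype)
    with hΨdef
  have hkey : ∀ (y : DirectSum ℕ fun n => Q n) (m : ℕ), q m (Ψ y) = ((y m : Q m) : G) := by
    intro y m
    induction y using DirectSum.induction_on with
    | zero => simp
    | of n c =>
      rw [hΨdef, DirectSum.toAddMonoid_of]
      obtain ⟨c, w, rfl⟩ := c
      by_cases hmn : m = n
      · subst hmn
        rw [DirectSum.of_eq_same]
        exact hqidem m w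
      · rw [DirectSum.of_eq_of_ne _ _ _ hmn]
        exact hql m n w (hmn)
    | add y z ihy ihz =>
      rw [map_add, map_add, ihy, ihz, DirectSum.add_apply, AddSubgroup.coe_add]
  have hker : ∀ y, Ψ y = 0 → y = 0 := by
    intro y hy
    refine DFinsupp.ext fun m => ?_
    have hk := hkey y m
    rw [hy, map_zero] at hk
    exact ZeroMemClass.coe_eq_zero.mp hk.symm
  have hinj : Function.Injective Ψ := (injective_iff_map_eq_zero Ψ).mpr hker
  have hsurj : Function.Surjective Ψ := by
    intro x
    obtain ⟨N, hN⟩ := hcover x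
    refine ⟨∑ n ∈ Finset.range N, DirectSum.of (fun n => (Q n : AddSubgroup G)) n
      ⟨q n x, AddMonoidHom.mem_range.mpr ⟨x, rfl⟩⟩, ?_⟩
    rw [map_sum]
    have : ∀ n ∈ Finset.range N, Ψ (DirectSum.of (fun n => (Q n : AddSubgroup G)) n
        ⟨q n x, AddMonoidHom.mem_range.mpr ⟨x, rfl⟩⟩) = r (n+1) x - r n x := by
      intro n _
      rw [hΨdef, DirectSum.toAddMonoid_of]
      rfl
    rw [Finset.sum_congr rfl this, Finset.sum_range_sub (fun n => r n x) N]
    have hr0 : r 0 x = 0 := rfl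
    rw [hN N le_rfl, hr0, sub_zero]
  exact ⟨(AddEquiv.ofBijective Ψ ⟨hinj, hsurj⟩).symm⟩

private lemma of_congr_zmod {ι : Type} [DecidableEq ι] (M : ι → ℕ) {i i' : ι} (h : i = i')
    (a : ZMod (M i)) :
    DirectSum.of (fun t => ZMod (M t)) i a =
      DirectSum.of (fun t => ZMod (M t)) i' ((ZMod.ringEquivCongr (by rw [h])) a) := by
  subst h
  rw [ZMod.ringEquivCongr_refl_apply]

private lemma embed_nat (p : ℕ) (J : Type) [Countable J] (E : J → ℕ) :
    ∃ k : ℕ → ℕ, Nonempty ((DirectSum J fun j => ZMod (p ^ E j)) ≃+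
      DirectSum ℕ fun i => ZMod (p ^ k i)) := by
  classical
  obtain ⟨f, hf⟩ := exists_injective_nat J
  set k : ℕ → ℕ := fun n => if h : ∃ j, f j = n then E h.choose else 0 with hkdef
  have hkn : ∀ (n : ℕ) (h : ∃ j, f j = n), k n = E h.choose := fun n h => dif_pos h
  have hk0 : ∀ (n : ℕ), ¬ (∃ j, f j = n) → k n = 0 := fun n h => dif_neg h
  have hkf : ∀ j, k (f j) = E j := by
    intro j
    have hex : ∃ j', f j' = f j := ⟨j, rfl⟩
    rw [hkn (f j) hex]
    congr 1
    exact hf hex.choose_spec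
  set A := fun j : J => ZMod (p ^ E j) with hA
  set B := fun n : ℕ => ZMod (p ^ k n) with hB
  have h1 : ∀ j, p ^ E j = p ^ k (f j) := fun j => by rw [hkf j]
  set Φ : (DirectSum J A) →+ DirectSum ℕ B := DirectSum.toAddMonoid (fun j =>
    (DirectSum.of B (f j)).comp (ZMod.ringEquivCongr (h1 j)).toAddEquiv.toAddMonoidHom) with hΦ
  set Ψ : (DirectSum ℕ B) →+ DirectSum J A := DirectSum.toAddMonoid (fun n =>
    if h : ∃ j, f j = n then
      (DirectSum.of A h.choose).comp
        (ZMod.ringEquivCongr (show p ^ k n = p ^ E h.choose by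
          rw [hkn n h])).toAddEquiv.toAddMonoidHom
    else 0) with hΨ
  have hΨΦ : Ψ.comp Φ = AddMonoidHom.id _ := by
    apply DirectSum.addHom_ext
    intro j x
    simp only [AddMonoidHom.comp_apply, AddMonoidHom.id_apply]
    rw [hΦ, DirectSum.toAddMonoid_of]
    simp only [AddMonoidHom.comp_apply, AddEquiv.toAddMonoidHom_eq_coe, AddMonoidHom.coe_coe]
    rw [hΨ, DirectSum.toAddMonoid_of]
    have hex : ∃ j', f j' = f j := ⟨j, rfl⟩
    have hcj : hex.choose = j := hf hex.choose_spec
    rw [dif_pos hex]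
    simp only [AddMonoidHom.comp_apply, AddEquiv.toAddMonoidHom_eq_coe, AddMonoidHom.coe_coe]
    rw [show ((ZMod.ringEquivCongr (h1 j)).toAddEquiv : ZMod (p ^ E j) → ZMod (p ^ k (f j))) x
      = ZMod.ringEquivCongr (h1 j) x from rfl]
    rw [show ((ZMod.ringEquivCongr (show p ^ k (f j) = p ^ E hex.choose by
        rw [hkn (f j) hex])).toAddEquiv : ZMod (p ^ k (f j)) → ZMod (p ^ E hex.choose))
        (ZMod.ringEquivCongr (h1 j) x)
      = ZMod.ringEquivCongr (show p ^ k (f j) = p ^ E hex.choose by rw [hkn (f j) hex])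
        (ZMod.ringEquivCongr (h1 j) x) from rfl]
    rw [ZMod.ringEquivCongr_ringEquivCongr_apply]
    rw [of_congr_zmod (fun t => p ^ E t) hcj]
    rw [ZMod.ringEquivCongr_ringEquivCongr_apply]
    rw [ZMod.ringEquivCongr_refl_apply]
    rfl
  have hΦΨ : Φ.comp Ψ = AddMonoidHom.id _ := by
    apply DirectSum.addHom_ext
    intro n y
    simp only [AddMonoidHom.comp_apply, AddMonoidHom.id_apply]
    rw [hΨ, DirectSum.toAddMonoid_of]
    by_cases h : ∃ j, f j = n
    · rw [dif_pos h]
      simp only [AddMonoidHom.comp_apply, AddEquiv.toAddMonoidHom_eq_coe, AddMonoidHom.coe_coe]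
      rw [hΦ, DirectSum.toAddMonoid_of]
      simp only [AddMonoidHom.comp_apply, AddEquiv.toAddMonoidHom_eq_coe, AddMonoidHom.coe_coe]
      rw [show ((ZMod.ringEquivCongr (show p ^ k n = p ^ E h.choose by
          rw [hkn n h])).toAddEquiv : ZMod (p ^ k n) → ZMod (p ^ E h.choose)) y
        = ZMod.ringEquivCongr (show p ^ k n = p ^ E h.choose by rw [hkn n h]) y from rfl]
      rw [show ((ZMod.ringEquivCongr (h1 h.choose)).toAddEquiv :
          ZMod (p ^ E h.choose) → ZMod (p ^ k (f h.choose)))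
          (ZMod.ringEquivCongr (show p ^ k n = p ^ E h.choose by rw [hkn n h]) y)
        = ZMod.ringEquivCongr (h1 h.choose)
          (ZMod.ringEquivCongr (show p ^ k n = p ^ E h.choose by rw [hkn n h]) y) from rfl]
      rw [ZMod.ringEquivCongr_ringEquivCongr_apply]
      rw [of_congr_zmod (fun t => p ^ k t) h.choose_spec]
      rw [ZMod.ringEquivCongr_ringEquivCongr_apply]
      rw [ZMod.ringEquivCongr_refl_apply]
      rfl
    · rw [dif_neg h]
      simp only [AddMonoidHom.zero_apply, map_zero]
      have hpk : p ^ k n = 1 := by rw [hk0 n h, pow_zero]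
      haveI : Subsingleton (B n) := Equiv.subsingleton (ZMod.ringEquivCongr hpk).toEquiv
      rw [Subsingleton.elim y 0, map_zero]
      rfl
  exact ⟨k, ⟨AddMonoidHom.toAddEquiv Φ Ψ hΨΦ hΦΨ⟩⟩

private lemma block_decomp (p : ℕ) (hp : p.Prime) (G : Type) [AddCommGroup G]
    (hG : ∀ g : G, ∃ n : ℕ, addOrderOf g = p ^ n) (A : AddSubgroup G) [Finite A] :
    ∃ (ι : Type) (_ : Fintype ι) (E : ι → ℕ),
      Nonempty (A ≃+ DirectSum ι fun i => ZMod (p ^ E i)) := by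
  classical
  obtain ⟨ι, hFT, nn, hlt, ⟨e⟩⟩ := AddCommGroup.equiv_directSum_zmod_of_finite' ↥A
  have hpow : ∀ i, ∃ m : ℕ, nn i = p ^ m := by
    intro i
    set x : ↥A := e.symm (DirectSum.of (fun i => ZMod (nn i)) i 1) with hx
    have h1 : addOrderOf x = nn i := by
      have ha : addOrderOf x = addOrderOf (DirectSum.of (fun i => ZMod (nn i)) i 1) :=
        addOrderOf_injective e.symm.toAddMonoidHom e.symm.injective _
      have hb2 : addOrderOf (DirectSum.of (fun i => ZMod (nn i)) i (1 : ZMod (nn i)))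
          = addOrderOf (1 : ZMod (nn i)) :=
        addOrderOf_injective _ (DirectSum.of_injective i) 1
      rw [ha, hb2, ZMod.addOrderOf_one]
    obtain ⟨m, hm⟩ := hG ↑x
    have h2 : addOrderOf x = addOrderOf (↑x : G) :=
      (addOrderOf_injective A.subtype Subtype.coe_injective x).symm
    exact ⟨m, by rw [← h1, h2, hm]⟩
  choose E hE using hpow
  exact ⟨ι, hFT, E, ⟨e.trans
    (DFinsupp.mapRange.addEquiv (fun i => (ZMod.ringEquivCongr (hE i)).toAddEquiv))⟩⟩

/-- Prüfer: a countable Abelian p-group is a direct sum of cyclic groups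
iff every nonzero element has finite height. -/
theorem stmt_3 (p : ℕ) (hp : p.Prime) (G : Type) [AddCommGroup G] [Countable G]
    (hG : ∀ g : G, ∃ n : ℕ, addOrderOf g = p ^ n) :
    (∃ k : ℕ → ℕ, Nonempty (G ≃+ DirectSum ℕ fun i => ZMod (p ^ k i))) ↔
      ∀ g : G, g ≠ 0 → ∃ n : ℕ, ¬ ∃ x : G, p ^ n • x = g := by
  classical
  constructor
  · rintro ⟨k, ⟨e⟩⟩ g hg
    have hge : e g ≠ 0 := fun h0 => hg (e.injective (by rw [h0, map_zero]))
    obtain ⟨i, hi⟩ : ∃ i, e g i ≠ 0 := by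
      by_contra hall
      push_neg at hall
      exact hge (DFinsupp.ext hall)
    refine ⟨k i, ?_⟩
    rintro ⟨x, hx⟩
    apply hi
    have h1 : e g = p ^ k i • e x := by rw [← map_nsmul, hx]
    have h2 : e g i = p ^ k i • (e x) i := by
      rw [h1]
      exact map_nsmul (DFinsupp.evalAddMonoidHom (β := fun i => ZMod (p ^ k i)) i) _ _
    rw [h2, nsmul_eq_mul, ZMod.natCast_self, zero_mul]
  · intro hht
    obtain ⟨Q, hQfin, ⟨e0⟩⟩ := global_equiv p hp G hG hht
    have hb : ∀ n, ∃ (ι : Type) (_ : Fintype ι) (E : ι → ℕ),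
        Nonempty (Q n ≃+ DirectSum ι fun i => ZMod (p ^ E i)) := fun n => by
      haveI := hQfin n
      exact block_decomp p hp G hG (Q n)
    choose ι hFT E hEq using hb
    have e1 : (DirectSum ℕ fun n => Q n) ≃+
        DirectSum ℕ (fun n => DirectSum (ι n) fun i => ZMod (p ^ E n i)) :=
      DFinsupp.mapRange.addEquiv (fun n => (hEq n).some)
    have e2 := (DirectSum.sigmaCurryEquiv (ι := ℕ) (α := ι)
      (δ := fun n i => ZMod (p ^ E n i))).symm
    haveI : ∀ n, Countable (ι n) := fun n => by
      haveI := hFT n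
      infer_instance
    obtain ⟨k, ⟨e3⟩⟩ := embed_nat p ((_n : ℕ) × ι _n) (fun x => E x.1 x.2)
    exact ⟨k, ⟨((e0.trans e1).trans e2).trans e3⟩⟩
end

section
/- Let G be an Abelian p-group and let g, g' ∈ G be elements of the same finite order lying in divisible subgroups D, D' ≤ G each isomorphic to ℤ(p^∞). Then there is an automorphism of G mapping g to g'. -/
/-- The Prüfer p-group ℤ(p^∞): the p-primary component of ℚ/ℤ. -/
abbrev Prufer (p : ℕ) [Fact p.Prime] : Type :=
  ↥(AddCommGroup.primaryComponent (AddCircle (1 : ℚ)) p)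


lemma baer_of_div {A : Type} [AddCommGroup A]
    (hA : ∀ a : A, ∀ n : ℕ, 0 < n → ∃ x : A, n • x = a) : Module.Baer ℤ A := by
  letI : DivisibleBy A ℤ :=
    { div := fun a n =>
        if h : n = 0 then 0
        else n.sign • Classical.choose (hA a n.natAbs (Int.natAbs_pos.mpr h))
      div_zero := fun a => by simp
      div_cancel := fun {n} a hn => by
        have h := Classical.choose_spec (hA a n.natAbs (Int.natAbs_pos.mpr hn))
        simp only [dif_neg hn]
        rw [← mul_zsmul, Int.mul_sign_self, natCast_zsmul, h] }
  exact Module.Baer.of_divisible A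

/-- Extension lemma: homs into a divisible group extend along injections. -/
lemma extend_hom {A M N : Type} [AddCommGroup A] [AddCommGroup M] [AddCommGroup N]
    (hA : ∀ a : A, ∀ n : ℕ, 0 < n → ∃ x : A, n • x = a)
    (i : M →+ N) (hi : Function.Injective i) (f : M →+ A) :
    ∃ F : N →+ A, ∀ m, F (i m) = f m := by
  obtain ⟨F, hF⟩ := (baer_of_div hA).extension_property_addMonoidHom i hi f
  exact ⟨F, fun m => by rw [← hF]; rfl⟩

/-- Divisibility transfers to the subtype. -/
lemma subtype_div {G : Type} [AddCommGroup G] {H : AddSubgroup G}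
    (h : ∀ d ∈ H, ∀ n : ℕ, 0 < n → ∃ x ∈ H, n • x = d) :
    ∀ a : H, ∀ n : ℕ, 0 < n → ∃ x : H, n • x = a := by
  intro a n hn
  obtain ⟨x, hx, hxa⟩ := h a a.2 n hn
  exact ⟨⟨x, hx⟩, by ext; simpa⟩

/-- `id + f` is an automorphism when `f ∘ f = 0`. -/
def unip {G : Type} [AddCommGroup G] (f : G →+ G) (hf : ∀ x, f (f x) = 0) : G ≃+ G where
  toFun x := x + f x
  invFun x := x - f x
  left_inv x := by simp only [map_add, hf, add_zero]; abel
  right_inv x := by simp only [map_sub, hf, sub_zero]; abel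
  map_add' x y := by simp only [map_add]; abel

@[simp] lemma unip_apply {G : Type} [AddCommGroup G] (f : G →+ G) (hf) (x : G) :
    unip f hf x = x + f x := rfl

/-- A hom from the cyclic subgroup generated by `g` sending `g` to any element
whose annihilator contains that of `g`. -/
lemma cyclic_hom {G A : Type} [AddCommGroup G] [AddCommGroup A] (g : G) (a : A)
    (hdvd : ∀ n : ℤ, n • g = 0 → n • a = 0) :
    ∃ f : (zmultiplesHom G g).range →+ A, f ⟨g, ⟨1, one_zsmul g⟩⟩ = a := by
  set φ := zmultiplesHom G g with hφ
  set κ := QuotientAddGroup.quotientKerEquivRange φ with hκ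
  set ℓ : ℤ ⧸ φ.ker →+ A := QuotientAddGroup.lift φ.ker (zmultiplesHom A a)
    (fun n hn => by
      simp only [AddMonoidHom.mem_ker, hφ, zmultiplesHom_apply] at hn
      simpa using hdvd n hn) with hℓ
  refine ⟨ℓ.comp κ.symm.toAddMonoidHom, ?_⟩
  have h1 : κ ((1 : ℤ) : ℤ ⧸ φ.ker) = ⟨g, ⟨1, one_zsmul g⟩⟩ := by
    ext
    simp [hκ, QuotientAddGroup.quotientKerEquivRange, QuotientAddGroup.rangeKerLift, hφ]
    change ((φ.rangeRestrict (1 : ℤ)) : G) = g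
    simp [hφ]
  have : κ.symm ⟨g, ⟨1, one_zsmul g⟩⟩ = ((1 : ℤ) : ℤ ⧸ φ.ker) := by
    rw [AddEquiv.symm_apply_eq, h1]
  simp only [AddMonoidHom.comp_apply, AddEquiv.coe_toAddMonoidHom, this]
  simp [hℓ]

/-- In a `p`-group, multiplication by an integer prime to `p` is an automorphism. -/
lemma coprime_smul_equiv {G : Type} {p : ℕ} (hp : p.Prime) [AddCommGroup G]
    (hG : ∀ g : G, ∃ n : ℕ, addOrderOf g = p ^ n) (a : ℤ) (ha : ¬ (p : ℤ) ∣ a) :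
    ∃ e : G ≃+ G, ∀ x, e x = a • x := by
  set f : G →+ G := AddMonoidHom.mk' (fun x => a • x) (fun x y => smul_add a x y) with hf
  have hinj : Function.Injective f := by
    rw [injective_iff_map_eq_zero]
    intro x hx
    simp only [hf, AddMonoidHom.mk'_apply] at hx
    have hdvd : (addOrderOf x : ℤ) ∣ a := addOrderOf_dvd_iff_zsmul_eq_zero.mpr hx
    obtain ⟨n, hn⟩ := hG x
    rcases Nat.eq_zero_or_pos n with h0 | h1
    · have : addOrderOf x = 1 := by rw [hn, h0, pow_zero]
      exact AddMonoid.addOrderOf_eq_one_iff.mp this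
    · exfalso
      apply ha
      calc (p : ℤ) ∣ (p ^ n : ℕ) := by
            exact_mod_cast dvd_pow_self p (by omega : n ≠ 0)
        _ ∣ a := hn ▸ hdvd
  have hsurj : Function.Surjective f := by
    intro y
    obtain ⟨n, hn⟩ := hG y
    have hcop : IsCoprime a ((p : ℤ) ^ n) := by
      apply IsCoprime.pow_right
      rw [Int.isCoprime_iff_gcd_eq_one]
      have : ¬ p ∣ a.natAbs := fun h => ha (Int.natCast_dvd.mpr h)
      have := (Nat.Prime.coprime_iff_not_dvd hp).mpr this
      rw [Int.gcd]
      simp [Nat.coprime_comm.mp this]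
    obtain ⟨u, v, huv⟩ := hcop
    refine ⟨u • y, ?_⟩
    have hNy : ((p : ℤ) ^ n) • y = 0 := by
      have : ((p ^ n : ℕ) : ℤ) • y = 0 := by
        rw [natCast_zsmul, ← hn, addOrderOf_nsmul_eq_zero]
      simpa using this
    calc f (u • y) = (a * u) • y := by simp [hf, ← mul_zsmul]
      _ = (u * a + v * (p : ℤ) ^ n) • y - (v * (p : ℤ) ^ n) • y := by
          rw [add_zsmul]; ring_nf; abel
      _ = (1 : ℤ) • y - v • (((p : ℤ) ^ n) • y) := by rw [huv, mul_zsmul]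
      _ = y := by rw [hNy, smul_zero, one_zsmul, sub_zero]
  exact ⟨AddEquiv.ofBijective f ⟨hinj, hsurj⟩, fun x => rfl⟩

/-- In a `p`-group, a suitable multiple of any nonzero element has order exactly `p`. -/
lemma exists_order_p {G : Type} [AddCommGroup G] {p : ℕ} (hp : p.Prime)
    (hG : ∀ g : G, ∃ n : ℕ, addOrderOf g = p ^ n) {x : G} (hx : x ≠ 0) :
    ∃ m : ℕ, addOrderOf (p ^ m • x) = p := by
  obtain ⟨n, hn⟩ := hG x
  have hn1 : 1 ≤ n := by
    by_contra h
    have : n = 0 := by omega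
    rw [this, pow_zero] at hn
    exact hx (AddMonoid.addOrderOf_eq_one_iff.mp hn)
  refine ⟨n - 1, ?_⟩
  set t := p ^ (n - 1) • x with ht
  have hpt : p • t = 0 := by
    rw [ht, smul_smul, ← pow_succ']
    have : p ^ (n - 1 + 1) = p ^ n := by congr 1; omega
    rw [this, ← hn, addOrderOf_nsmul_eq_zero]
  have htne : t ≠ 0 := by
    intro h0
    have : addOrderOf x ∣ p ^ (n - 1) := addOrderOf_dvd_iff_nsmul_eq_zero.mpr h0
    rw [hn] at this
    have := Nat.le_of_dvd (pow_pos hp.pos _) this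
    have := Nat.pow_lt_pow_right hp.one_lt (by omega : n - 1 < n)
    omega
  have hdvd : addOrderOf t ∣ p := addOrderOf_dvd_iff_nsmul_eq_zero.mpr hpt
  rcases (Nat.Prime.eq_one_or_self_of_dvd hp _ hdvd) with h | h
  · exact absurd (AddMonoid.addOrderOf_eq_one_iff.mp h) htne
  · exact h

/-- A divisible subgroup containing an element of order `p` contains elements of
order `p ^ k` for every `k ≥ 1`. -/
lemma exists_order_pow {G : Type} [AddCommGroup G] {p : ℕ} (hp : p.Prime)
    (C : AddSubgroup G) (hdiv : ∀ d ∈ C, ∀ n : ℕ, 0 < n → ∃ x ∈ C, n • x = d)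
    {s : G} (hs : s ∈ C) (hso : addOrderOf s = p) (k : ℕ) :
    ∃ y ∈ C, addOrderOf y = p ^ (k + 1) := by
  induction k with
  | zero => exact ⟨s, hs, by simpa using hso⟩
  | succ j ih =>
    obtain ⟨y, hy, hyo⟩ := ih
    obtain ⟨z, hz, hzy⟩ := hdiv y hy p hp.pos
    refine ⟨z, hz, ?_⟩
    have h1 : p ^ (j + 2) • z = 0 := by
      have : p ^ (j + 2) • z = p ^ (j + 1) • (p • z) := by
        rw [smul_smul, ← pow_succ]
      rw [this, hzy, ← hyo, addOrderOf_nsmul_eq_zero]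
    have h2 : ¬ p ^ (j + 1) • z = 0 := by
      intro h0
      have : p ^ j • y = 0 := by
        rw [← hzy, smul_smul, ← pow_succ]
        exact h0
      have hd : addOrderOf y ∣ p ^ j := addOrderOf_dvd_iff_nsmul_eq_zero.mpr this
      rw [hyo] at hd
      have := Nat.le_of_dvd (pow_pos hp.pos _) hd
      have := Nat.pow_lt_pow_right hp.one_lt (by omega : j < j + 1)
      omega
    have hdvd : addOrderOf z ∣ p ^ (j + 2) := addOrderOf_dvd_iff_nsmul_eq_zero.mpr h1
    obtain ⟨i, hi, hio⟩ := (Nat.dvd_prime_pow hp).mp hdvd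
    have : ¬ i ≤ j + 1 := by
      intro hle
      exact h2 (addOrderOf_dvd_iff_nsmul_eq_zero.mp (hio ▸ pow_dvd_pow p hle))
    have : i = j + 2 := by omega
    rw [hio, this]


lemma circle_torsion (N : ℕ) (hN : 0 < N) (y : AddCircle (1 : ℚ)) (hy : N • y = 0) :
    y ∈ AddSubgroup.zmultiples (((N : ℚ)⁻¹ : ℚ) : AddCircle (1 : ℚ)) := by
  induction y using QuotientAddGroup.induction_on with
  | H q =>
    have hq : ((N • q : ℚ) : AddCircle (1 : ℚ)) = 0 := by
      rw [← hy]; rfl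
    rw [QuotientAddGroup.eq_zero_iff] at hq
    obtain ⟨m, hm⟩ := AddSubgroup.mem_zmultiples_iff.mp hq
    have hNQ : (N : ℚ) ≠ 0 := by positivity
    have hq' : q = m • ((N : ℚ)⁻¹) := by
      have : (m : ℚ) = N * q := by
        have := hm
        simpa [zsmul_eq_mul, nsmul_eq_mul] using this
      field_simp [zsmul_eq_mul, this]
      rw [zsmul_eq_mul, this]
      field_simp
    rw [AddSubgroup.mem_zmultiples_iff]
    exact ⟨m, by rw [hq']; rfl⟩

lemma mem_zmultiples_of_torsion {G : Type} [AddCommGroup G] (p : ℕ) [Fact p.Prime]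
    (D : AddSubgroup G) (hD : Nonempty (D ≃+ Prufer p)) (k : ℕ)
    (g x : G) (hg : g ∈ D) (hx : x ∈ D) (hord : addOrderOf g = p ^ k)
    (hxk : p ^ k • x = 0) : x ∈ AddSubgroup.zmultiples g := by
  obtain ⟨e⟩ := hD
  set u : AddCircle (1 : ℚ) := ((e ⟨g, hg⟩ : Prufer p) : AddCircle (1 : ℚ)) with hu
  set v : AddCircle (1 : ℚ) := ((e ⟨x, hx⟩ : Prufer p) : AddCircle (1 : ℚ)) with hv
  have hp : 0 < p := (Fact.out : p.Prime).pos
  have hN : 0 < p ^ k := pow_pos hp k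
  have hordu : addOrderOf u = p ^ k := by
    rw [hu, AddSubgroup.addOrderOf_coe, AddEquiv.addOrderOf_eq, AddSubgroup.addOrderOf_mk, hord]
  have hvk : p ^ k • v = 0 := by
    have h1 : p ^ k • (⟨x, hx⟩ : D) = 0 := by ext; simpa
    have h2 : p ^ k • e ⟨x, hx⟩ = 0 := by rw [← map_nsmul, h1, map_zero]
    have h3 := congrArg (Subtype.val) h2
    simpa [hv] using h3
  set w : AddCircle (1 : ℚ) := ((((p ^ k : ℕ) : ℚ)⁻¹ : ℚ) : AddCircle (1 : ℚ)) with hw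
  have hwN : (p ^ k) • w = 0 := by
    have hne : ((p ^ k : ℕ) : ℚ) ≠ 0 := by positivity
    have h4 : (p ^ k • (((p ^ k : ℕ) : ℚ)⁻¹ : ℚ) : ℚ) = (1 : ℚ) := by
      rw [nsmul_eq_mul]
      field_simp
    calc (p ^ k) • w = ((p ^ k • (((p ^ k : ℕ) : ℚ)⁻¹ : ℚ) : ℚ) : AddCircle (1 : ℚ)) := rfl
      _ = ((1 : ℚ) : AddCircle (1 : ℚ)) := by rw [h4]
      _ = 0 := by
          rw [QuotientAddGroup.eq_zero_iff]
          exact AddSubgroup.mem_zmultiples 1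
  have hwfin : IsOfFinAddOrder w := isOfFinAddOrder_iff_nsmul_eq_zero.mpr ⟨p ^ k, hN, hwN⟩
  haveI : Finite (AddSubgroup.zmultiples w) := hwfin.finite_zmultiples.to_subtype
  have hle : AddSubgroup.zmultiples u ≤ AddSubgroup.zmultiples w := by
    rw [AddSubgroup.zmultiples_le]
    exact circle_torsion (p ^ k) hN u (by rw [← hordu]; exact addOrderOf_nsmul_eq_zero u)
  have hcard : Nat.card (AddSubgroup.zmultiples w) ≤ Nat.card (AddSubgroup.zmultiples u) := by
    rw [Nat.card_zmultiples, Nat.card_zmultiples, hordu]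
    exact Nat.le_of_dvd hN (addOrderOf_dvd_iff_nsmul_eq_zero.mpr hwN)
  have heq := AddSubgroup.eq_of_le_of_card_ge hle hcard
  have hvmem : v ∈ AddSubgroup.zmultiples u := by
    rw [heq]
    exact circle_torsion (p ^ k) hN v hvk
  obtain ⟨m, hm⟩ := AddSubgroup.mem_zmultiples_iff.mp hvmem
  rw [AddSubgroup.mem_zmultiples_iff]
  refine ⟨m, ?_⟩
  have h1 : m • e ⟨g, hg⟩ = e ⟨x, hx⟩ := by
    apply Subtype.ext
    simpa using hm
  have h2 : m • (⟨g, hg⟩ : D) = ⟨x, hx⟩ := by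
    apply e.injective
    rw [map_zsmul, h1]
  simpa using congrArg (Subtype.val) h2
lemma lemT {G : Type} [AddCommGroup G] (D₁ D₂ : AddSubgroup G)
    (h1 : ∀ d ∈ D₁, ∀ n : ℕ, 0 < n → ∃ x ∈ D₁, n • x = d)
    (h2 : ∀ d ∈ D₂, ∀ n : ℕ, 0 < n → ∃ x ∈ D₂, n • x = d)
    (hdisj : D₁ ⊓ D₂ = ⊥)
    (g g' : G) (hg : g ∈ D₁) (hg' : g' ∈ D₂)
    (hord : addOrderOf g = addOrderOf g') :
    ∃ e : G ≃+ G, e g = g' := by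
  -- the two cyclic homs, extended to all of G
  have hdvd : ∀ n : ℤ, n • g = 0 → n • (⟨g', hg'⟩ : D₂) = 0 := by
    intro n hn
    have : (addOrderOf g : ℤ) ∣ n := addOrderOf_dvd_iff_zsmul_eq_zero.mpr hn
    rw [hord] at this
    have : n • g' = 0 := addOrderOf_dvd_iff_zsmul_eq_zero.mp this
    ext; simpa
  have hdvd' : ∀ n : ℤ, n • g' = 0 → n • (⟨g, hg⟩ : D₁) = 0 := by
    intro n hn
    have : (addOrderOf g' : ℤ) ∣ n := addOrderOf_dvd_iff_zsmul_eq_zero.mpr hn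
    rw [← hord] at this
    have : n • g = 0 := addOrderOf_dvd_iff_zsmul_eq_zero.mp this
    ext; simpa
  obtain ⟨f₀, hf₀⟩ := cyclic_hom g (⟨g', hg'⟩ : D₂) hdvd
  obtain ⟨f₀', hf₀'⟩ := cyclic_hom g' (⟨g, hg⟩ : D₁) hdvd'
  obtain ⟨Ψ, hΨ⟩ := extend_hom (subtype_div h2) (zmultiplesHom G g).range.subtype
    Subtype.coe_injective f₀
  obtain ⟨Χ, hΧ⟩ := extend_hom (subtype_div h1) (zmultiplesHom G g').range.subtype
    Subtype.coe_injective f₀'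
  have hΨg : Ψ g = ⟨g', hg'⟩ := by
    have := hΨ ⟨g, ⟨1, one_zsmul g⟩⟩
    rwa [hf₀] at this
  have hΧg' : Χ g' = ⟨g, hg⟩ := by
    have := hΧ ⟨g', ⟨1, one_zsmul g'⟩⟩
    rwa [hf₀'] at this
  -- retractions killing the other subgroup
  have mkret : ∀ (A B : AddSubgroup G), A ⊓ B = ⊥ →
      (∀ d ∈ A, ∀ n : ℕ, 0 < n → ∃ x ∈ A, n • x = d) →
      ∃ r : G →+ A, (∀ a (ha : a ∈ A), r a = ⟨a, ha⟩) ∧ (∀ b ∈ B, r b = 0) := by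
    intro A B hAB hAdiv
    set q := QuotientAddGroup.mk' B with hq
    have hinj : Function.Injective (q.comp A.subtype) := by
      rw [injective_iff_map_eq_zero]
      intro x hx
      simp only [AddMonoidHom.comp_apply, hq] at hx
      have hxB : (x : G) ∈ B := by
        rwa [QuotientAddGroup.mk'_apply, QuotientAddGroup.eq_zero_iff] at hx
      have : (x : G) ∈ A ⊓ B := ⟨x.2, hxB⟩
      rw [hAB] at this
      exact Subtype.ext this
    obtain ⟨w, hw⟩ := extend_hom (subtype_div hAdiv) (q.comp A.subtype) hinj
      (AddMonoidHom.id A)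
    refine ⟨w.comp q, fun a ha => ?_, fun b hb => ?_⟩
    · have := hw ⟨a, ha⟩
      simpa using this
    · have : q b = 0 := by
        rw [hq, QuotientAddGroup.mk'_apply, QuotientAddGroup.eq_zero_iff]
        exact hb
      simp [this]
  obtain ⟨r₁, hr₁, hr₁'⟩ := mkret D₁ D₂ hdisj h1
  obtain ⟨r₂, hr₂, hr₂'⟩ := mkret D₂ D₁ (by rw [inf_comm]; exact hdisj) h2
  -- the two unipotent automorphisms
  set f₁ : G →+ G := D₂.subtype.comp (Ψ.comp (D₁.subtype.comp r₁)) with hf₁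
  set f₂ : G →+ G := -(D₁.subtype.comp (Χ.comp (D₂.subtype.comp r₂))) with hf₂
  have hf₁sq : ∀ x, f₁ (f₁ x) = 0 := by
    intro x
    have h0 : r₁ (f₁ x) = 0 := hr₁' _ (by simp [hf₁])
    simp only [hf₁, AddMonoidHom.comp_apply] at h0 ⊢
    rw [h0]
    simp
  have hf₂sq : ∀ x, f₂ (f₂ x) = 0 := by
    intro x
    have h2' : r₂ (f₂ x) = 0 := by
      apply hr₂'
      simp [hf₂]
    simp only [hf₂, AddMonoidHom.neg_apply, AddMonoidHom.comp_apply, map_neg, neg_eq_zero] at h2' ⊢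
    rw [h2']
    simp
  have hf₁g : f₁ g = g' := by
    simp [hf₁, AddMonoidHom.comp_apply, hr₁ g hg, hΨg]
  have hf₂g : f₂ g = 0 := by
    simp [hf₂, AddMonoidHom.comp_apply, hr₂' g hg]
  have hf₂g' : f₂ g' = -g := by
    simp [hf₂, AddMonoidHom.comp_apply, hr₂ g' hg', hΧg']
  refine ⟨(unip f₁ hf₁sq).trans (unip f₂ hf₂sq), ?_⟩
  simp only [AddEquiv.trans_apply, unip_apply, hf₁g, map_add, hf₂g, hf₂g']
  abel


/-- elements of the same finite order lying in divisible subgroups of G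
each isomorphic to ℤ(p^∞) are automorphic in G. -/
theorem stmt_10 (p : ℕ) [Fact p.Prime] (G : Type) [AddCommGroup G]
    (hG : ∀ g : G, ∃ n : ℕ, addOrderOf g = p ^ n)
    (D D' : AddSubgroup G)
    (hDdiv : ∀ d ∈ D, ∀ n : ℕ, 0 < n → ∃ x ∈ D, n • x = d)
    (hD'div : ∀ d ∈ D', ∀ n : ℕ, 0 < n → ∃ x ∈ D', n • x = d)
    (hD : Nonempty (D ≃+ Prufer p)) (hD' : Nonempty (D' ≃+ Prufer p))
    (g g' : G) (hg : g ∈ D) (hg' : g' ∈ D') (k : ℕ)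
    (hord : addOrderOf g = p ^ k) (hord' : addOrderOf g' = p ^ k) :
    ∃ e : G ≃+ G, e g = g' := by
  have hp : p.Prime := Fact.out
  rcases Nat.eq_zero_or_pos k with hk0 | hk1
  · -- k = 0 : both elements are zero
    subst hk0
    rw [pow_zero] at hord hord'
    have hg0 : g = 0 := AddMonoid.addOrderOf_eq_one_iff.mp hord
    have hg'0 : g' = 0 := AddMonoid.addOrderOf_eq_one_iff.mp hord'
    exact ⟨AddEquiv.refl G, by rw [hg0, hg'0]; simp⟩
  by_cases hcyc : g' ∈ AddSubgroup.zmultiples g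
  · -- g' is a multiple of g : multiplication by a unit mod p
    obtain ⟨a, ha⟩ := AddSubgroup.mem_zmultiples_iff.mp hcyc
    have hpa : ¬ (p : ℤ) ∣ a := by
      rintro ⟨b, hb⟩
      have hpk : ((p ^ k : ℕ) : ℤ) • g = 0 := by
        rw [natCast_zsmul, ← hord, addOrderOf_nsmul_eq_zero]
      have h0 : ((p ^ (k - 1) : ℕ) : ℤ) • g' = 0 := by
        rw [← ha, hb]
        have hcoef : ((p ^ (k - 1) : ℕ) : ℤ) * ((p : ℤ) * b) = b * ((p ^ k : ℕ) : ℤ) := by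
          have hpp : (p : ℤ) ^ (k - 1) * (p : ℤ) = (p : ℤ) ^ k := by
            rw [← pow_succ]
            congr 1
            omega
          push_cast
          rw [← hpp]
          ring
        rw [← mul_zsmul, hcoef, mul_zsmul, hpk, smul_zero]
      rw [natCast_zsmul] at h0
      have hdvd : addOrderOf g' ∣ p ^ (k - 1) := addOrderOf_dvd_iff_nsmul_eq_zero.mpr h0
      rw [hord'] at hdvd
      have := Nat.le_of_dvd (pow_pos hp.pos _) hdvd
      have := Nat.pow_lt_pow_right hp.one_lt (by omega : k - 1 < k)
      omega
    obtain ⟨e, he⟩ := coprime_smul_equiv hp hG a hpa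
    exact ⟨e, by rw [he, ha]⟩
  by_cases hdisj : D ⊓ D' = ⊥
  · exact lemT D D' hDdiv hD'div hdisj g g' hg hg' (by rw [hord, hord'])
  -- the hard case : the two Prüfer subgroups intersect nontrivially
  -- get an element of order p in D ⊓ D'
  have hex : ∃ x ∈ D ⊓ D', x ≠ 0 := by
    by_contra h
    push_neg at h
    exact hdisj ((AddSubgroup.eq_bot_iff_forall _).mpr h)
  obtain ⟨x, hxDD', hxne⟩ := hex
  obtain ⟨m, hm⟩ := exists_order_p hp hG hxne
  set s := p ^ m • x with hs
  have hsD : s ∈ D := AddSubgroup.nsmul_mem D (AddSubgroup.mem_inf.mp hxDD').1 _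
  have hsD' : s ∈ D' := AddSubgroup.nsmul_mem D' (AddSubgroup.mem_inf.mp hxDD').2 _
  have hso : addOrderOf s = p ^ 1 := by rw [pow_one]; exact hm
  -- the torsion trick : p-torsion of D' lies in D
  have hsocle : ∀ t ∈ D', p • t = 0 → t ∈ D := by
    intro t ht hpt
    have : t ∈ AddSubgroup.zmultiples s :=
      mem_zmultiples_of_torsion p D' hD' 1 s t hsD' ht hso (by rw [pow_one]; exact hpt)
    obtain ⟨n, hn⟩ := AddSubgroup.mem_zmultiples_iff.mp this
    rw [← hn]
    exact AddSubgroup.zsmul_mem D hsD n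
  -- retraction onto D
  obtain ⟨r, hr⟩ := extend_hom (subtype_div hDdiv) D.subtype Subtype.coe_injective
    (AddMonoidHom.id D)
  have hrD : ∀ b (hb : b ∈ D), r b = ⟨b, hb⟩ := fun b hb => hr ⟨b, hb⟩
  -- the complement of D inside D ⊔ D'
  set C : AddSubgroup G := (D ⊔ D') ⊓ (D.subtype.comp r).ker with hC
  have hCmem : ∀ y : G, y ∈ C ↔ y ∈ D ⊔ D' ∧ r y = 0 := by
    intro y
    rw [hC, AddSubgroup.mem_inf, AddMonoidHom.mem_ker]
    constructor
    · rintro ⟨h1, h2⟩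
      exact ⟨h1, by rwa [AddMonoidHom.comp_apply, AddSubgroup.coe_subtype,
        ZeroMemClass.coe_eq_zero] at h2⟩
    · rintro ⟨h1, h2⟩
      exact ⟨h1, by rw [AddMonoidHom.comp_apply, h2]; simp⟩
  have hCdiv : ∀ d ∈ C, ∀ n : ℕ, 0 < n → ∃ z ∈ C, n • z = d := by
    intro d hd n hn
    obtain ⟨hdsup, hrd⟩ := (hCmem d).mp hd
    obtain ⟨u, hu, v, hv, huv⟩ := AddSubgroup.mem_sup.mp hdsup
    obtain ⟨xu, hxu, hxu'⟩ := hDdiv u hu n hn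
    obtain ⟨xv, hxv, hxv'⟩ := hD'div v hv n hn
    set y := xu + xv with hy
    have hysup : y ∈ D ⊔ D' := AddSubgroup.add_mem _
      (AddSubgroup.mem_sup_left hxu) (AddSubgroup.mem_sup_right hxv)
    have hny : n • y = d := by rw [hy, smul_add, hxu', hxv', huv]
    refine ⟨y - (r y : G), ?_, ?_⟩
    · rw [hCmem]
      constructor
      · exact AddSubgroup.sub_mem _ hysup (AddSubgroup.mem_sup_left (r y).2)
      · rw [map_sub, hrD _ (r y).2]
        simp
    · have h6 : n • (r y) = r d := by rw [← map_nsmul, hny]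
      have h7 : n • ((r y : D) : G) = ((r d : D) : G) := by
        rw [← h6]
        norm_cast
      rw [smul_sub, hny, h7, hrd]
      simp
  have hCD : C ⊓ D = ⊥ := by
    rw [AddSubgroup.eq_bot_iff_forall]
    intro y hy
    obtain ⟨hyC, hyD⟩ := AddSubgroup.mem_inf.mp hy
    have := ((hCmem y).mp hyC).2
    rw [hrD y hyD] at this
    simpa using congrArg (Subtype.val) this
  have hCD' : C ⊓ D' = ⊥ := by
    rw [AddSubgroup.eq_bot_iff_forall]
    intro y hy
    by_contra hyne
    obtain ⟨hyC, hyD'⟩ := AddSubgroup.mem_inf.mp hy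
    obtain ⟨m', hm'⟩ := exists_order_p hp hG hyne
    set t := p ^ m' • y with htdef
    have htC : t ∈ C := AddSubgroup.nsmul_mem C hyC _
    have htD' : t ∈ D' := AddSubgroup.nsmul_mem D' hyD' _
    have htne : t ≠ 0 := by
      intro h0
      rw [h0] at hm'
      simp at hm'
      exact hp.one_lt.ne' hm'.symm
    have hpt : p • t = 0 := by rw [← hm', addOrderOf_nsmul_eq_zero]
    have htD : t ∈ D := hsocle t htD' hpt
    have : t ∈ C ⊓ D := AddSubgroup.mem_inf.mpr ⟨htC, htD⟩
    rw [hCD] at this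
    exact htne this
  -- C is nontrivial : D' is not contained in D
  have hD'notle : ¬ D' ≤ D := by
    intro hle
    apply hcyc
    exact mem_zmultiples_of_torsion p D hD k g g' hg (hle hg') hord
      (by rw [← hord', addOrderOf_nsmul_eq_zero])
  obtain ⟨v, hvD', hvD⟩ := SetLike.not_le_iff_exists.mp hD'notle
  set c := v - (r v : G) with hcdef
  have hcC : c ∈ C := by
    rw [hCmem]
    constructor
    · exact AddSubgroup.sub_mem _ (AddSubgroup.mem_sup_right hvD')
        (AddSubgroup.mem_sup_left (r v).2)
    · rw [map_sub, hrD _ (r v).2]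
      simp
  have hcne : c ≠ 0 := by
    intro h0
    apply hvD
    have : v = (r v : G) := by rwa [hcdef, sub_eq_zero] at h0
    rw [this]
    exact (r v).2
  -- an element of order p in C, then one of order p^k
  obtain ⟨m'', hm''⟩ := exists_order_p hp hG hcne
  have hsC : p ^ m'' • c ∈ C := AddSubgroup.nsmul_mem C hcC _
  obtain ⟨g₁, hg₁C, hg₁ord⟩ := exists_order_pow hp C hCdiv hsC hm'' (k - 1)
  have hg₁ord' : addOrderOf g₁ = p ^ k := by
    rw [hg₁ord]
    congr 1
    omega
  -- two applications of the disjoint case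
  obtain ⟨e₁, he₁⟩ := lemT D C hDdiv hCdiv (by rw [inf_comm]; exact hCD) g g₁ hg hg₁C
    (by rw [hord, hg₁ord'])
  obtain ⟨e₂, he₂⟩ := lemT C D' hCdiv hD'div hCD' g₁ g' hg₁C hg' (by rw [hg₁ord', hord'])
  exact ⟨e₁.trans e₂, by rw [AddEquiv.trans_apply, he₁, he₂]⟩
end

section
/- If F is a finite pure subgroup of an Abelian p-group G in which all elements have finite height, then F is a direct summand of G, and any isomorphism between two finite pure subgroups F and F' of G that are abstractly isomorphic extends to an automorphism of G when G = F ⊕ H = F' ⊕ H' with H ≅ H'. -/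
open AddSubgroup

lemma cyclic_compl (p k : ℕ) (hp : p.Prime) {G : Type} [AddCommGroup G] (b : G)
    (hb : addOrderOf b = p ^ k)
    (hdisj : ∀ a : G, a ∈ zmultiples b → (∃ x : G, p ^ k • x = a) → a = 0) :
    ∃ H : AddSubgroup G, IsCompl (zmultiples b) H := by
  classical
  set C : AddSubgroup G := zmultiples b with hC
  by_cases hbz : b = 0
  · refine ⟨⊤, ?_⟩
    have : C = ⊥ := by
      rw [hC, hbz, AddSubgroup.zmultiples_zero_eq_bot]
    rw [this]; exact isCompl_bot_top
  -- k ≥ 1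
  have hk1 : k ≠ 0 := by
    intro h
    rw [h, pow_zero] at hb
    exact hbz (AddMonoid.addOrderOf_eq_one_iff.mp hb)
  obtain ⟨k', rfl⟩ := Nat.exists_eq_succ_of_ne_zero hk1
  set P : AddSubgroup G := (zsmulAddGroupHom ((p : ℤ) ^ (k' + 1))).range with hP
  have hmemP : ∀ x : G, p ^ (k' + 1) • x ∈ P := by
    intro x
    exact ⟨x, by rw [zsmulAddGroupHom_apply, ← Nat.cast_pow, natCast_zsmul]⟩
  have hPdis : Disjoint C P := by
    rw [AddSubgroup.disjoint_def]
    rintro a haC ⟨y, hy⟩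
    refine hdisj a haC ⟨y, ?_⟩
    rw [← hy, zsmulAddGroupHom_apply, ← Nat.cast_pow, natCast_zsmul]
  -- Zorn
  set S : Set (AddSubgroup G) := {H | P ≤ H ∧ Disjoint C H} with hS
  obtain ⟨H, -, hHmax⟩ := zorn_le_nonempty₀ S (fun c hcS hchain y hyc => by
      refine ⟨sSup c, ⟨?_, ?_⟩, fun z hz => le_sSup hz⟩
      · exact le_trans (hcS hyc).1 (le_sSup hyc)
      · rw [AddSubgroup.disjoint_def]
        intro x hxC hxs
        rw [AddSubgroup.mem_sSup_of_directedOn ⟨y, hyc⟩ hchain.directedOn] at hxs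
        obtain ⟨s, hsc, hxsmem⟩ := hxs
        exact ((hcS hsc).2.eq_bot ▸ AddSubgroup.mem_inf.mpr ⟨hxC, hxsmem⟩ : x ∈ (⊥ : AddSubgroup G)))
    P ⟨le_rfl, hPdis⟩
  have hHS : H ∈ S := hHmax.prop
  have hPH : P ≤ H := hHS.1
  have hdisCH : Disjoint C H := hHS.2
  -- socle step
  have hsoc : ∀ x : G, p • x ∈ H → x ∈ C ⊔ H := by
    intro x hpx
    by_cases hx : x ∈ C ⊔ H
    · exact hx
    exfalso
    have hxH : x ∉ H := fun h => hx (SetLike.le_def.mp le_sup_right h)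
    have hnd : ¬ Disjoint C (H ⊔ zmultiples x) := by
      intro hd
      have hle : H ⊔ zmultiples x ≤ H :=
        hHmax.le_of_ge ⟨le_trans hPH le_sup_left, hd⟩ le_sup_left
      exact hxH (hle (SetLike.le_def.mp le_sup_right (mem_zmultiples x)))
    rw [AddSubgroup.disjoint_def] at hnd
    push_neg at hnd
    obtain ⟨c0, hc0C, hc0mem, hc0ne⟩ := hnd
    rw [AddSubgroup.mem_sup] at hc0mem
    obtain ⟨h, hhH, z, hz, hhz⟩ := hc0mem
    obtain ⟨t, rfl⟩ := mem_zmultiples_iff.mp hz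
    have hpzx : (p : ℤ) • x ∈ H := by rwa [natCast_zsmul]
    by_cases hdvd : (p : ℤ) ∣ t
    · obtain ⟨s, rfl⟩ := hdvd
      have : ((p : ℤ) * s) • x ∈ H := by
        rw [mul_comm, mul_smul]
        exact zsmul_mem hpzx s
      have hc0H : c0 ∈ H := by rw [← hhz]; exact add_mem hhH this
      exact hc0ne (AddSubgroup.disjoint_def.mp hdisCH hc0C hc0H)
    · -- coprime; Bezout
      have hcop : IsCoprime (p : ℤ) t := by
        rw [Int.isCoprime_iff_gcd_eq_one]
        have : ¬ (p ∣ t.natAbs) := fun hnat => hdvd (Int.natCast_dvd.mpr hnat)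
        simpa [Int.gcd] using (Nat.Prime.coprime_iff_not_dvd hp).mpr this
      obtain ⟨a, v, hav⟩ := hcop
      have htx : t • x ∈ C ⊔ H := by
        have : t • x = c0 - h := by rw [← hhz]; abel
        rw [this]
        exact sub_mem (SetLike.le_def.mp le_sup_left hc0C) (SetLike.le_def.mp le_sup_right hhH)
      have : x ∈ C ⊔ H := by
        have hx1 : x = (a * (p:ℤ)) • x + (v * t) • x := by
          rw [← add_smul, hav, one_smul]
        rw [hx1]
        refine add_mem ?_ ?_
        · rw [mul_smul]
          exact SetLike.le_def.mp le_sup_right (zsmul_mem hpzx a)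
        · rw [mul_smul]
          exact zsmul_mem htx v
      exact hx this
  -- main induction
  have hmain : ∀ r : ℕ, ∀ x : G, p ^ r • x ∈ H → x ∈ C ⊔ H := by
    intro r
    induction r with
    | zero => intro x hx; simp at hx; exact SetLike.le_def.mp le_sup_right hx
    | succ r ih =>
      intro x hx
      have h1 : p ^ r • (p • x) ∈ H := by
        rw [smul_smul, ← pow_succ]; exact hx
      have h2 := ih (p • x) h1
      rw [AddSubgroup.mem_sup] at h2
      obtain ⟨c, hcC, h, hhH, hch⟩ := h2
      have hpk : p ^ (k' + 1) • x ∈ H := hPH (hmemP x)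
      have hceq : c = p • x - h := by rw [← hch]; abel
      have hck' : p ^ k' • c ∈ H := by
        rw [hceq, smul_sub, smul_smul, ← pow_succ]
        exact sub_mem hpk (nsmul_mem hhH _)
      have hc0 : p ^ k' • c = 0 :=
        AddSubgroup.disjoint_def.mp hdisCH (nsmul_mem hcC _) hck'
      obtain ⟨m, rfl⟩ := mem_zmultiples_iff.mp hcC
      have hz : (((p:ℤ) ^ k') * m) • b = 0 := by
        rw [mul_smul, ← hc0, ← natCast_zsmul, Nat.cast_pow]
      have hdvd : ((p : ℤ) ^ (k' + 1)) ∣ ((p:ℤ) ^ k') * m := by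
        have := addOrderOf_dvd_iff_zsmul_eq_zero.mpr hz
        rwa [hb, Nat.cast_pow] at this
      have hpm : (p : ℤ) ∣ m := by
        rw [pow_succ] at hdvd
        exact (mul_dvd_mul_iff_left (a := (p:ℤ) ^ k')
          (pow_ne_zero _ (by exact_mod_cast hp.ne_zero))).mp hdvd
      obtain ⟨m', rfl⟩ := hpm
      have hcsplit : ((p:ℤ) * m') • b = p • (m' • b) := by
        rw [mul_smul, natCast_zsmul]
      have hxc' : p • (x - m' • b) ∈ H := by
        have : p • (x - m' • b) = h := by
          rw [smul_sub, ← hcsplit, ← hch]; abel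
        rw [this]; exact hhH
      have := hsoc _ hxc'
      have hc'C : m' • b ∈ C :=  zsmul_mem (mem_zmultiples b) m'
      have : x = (x - m' • b) + m' • b := by abel
      rw [this]
      exact add_mem (hsoc _ hxc') (SetLike.le_def.mp le_sup_left hc'C)
  refine ⟨H, hdisCH, ?_⟩
  rw [codisjoint_iff]
  rw [eq_top_iff]
  intro x _
  exact hmain (k' + 1) x (hPH (hmemP x))

lemma summand (p : ℕ) (hp : p.Prime) (n : ℕ) :
    ∀ {G : Type} [AddCommGroup G], (∀ g : G, ∃ m : ℕ, addOrderOf g = p ^ m) →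
      ∀ F : AddSubgroup G, Nat.card F ≤ n → (F : Set G).Finite →
        (∀ m : ℕ, ∀ a ∈ F, (∃ x : G, p ^ m • x = a) → ∃ c ∈ F, p ^ m • c = a) →
        ∃ H : AddSubgroup G, IsCompl F H := by
  induction n with
  | zero =>
    intro G _ hG F hcard hfin hpure
    exfalso
    have : Nat.card F ≠ 0 := Nat.card_ne_zero.mpr ⟨⟨⟨0, F.zero_mem⟩⟩, hfin.to_subtype⟩
    omega
  | succ n ih =>
    intro G _ hG F hcard hfin hpure
    by_cases hbot : F = ⊥
    · exact ⟨⊤, hbot ▸ isCompl_bot_top⟩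
    -- pick element of maximal order
    obtain ⟨b0', hb0ne'⟩ := (AddSubgroup.ne_bot_iff_exists_ne_zero (H := F)).mp hbot
    obtain ⟨b0, hb0F⟩ := b0'
    have hb0ne : b0 ≠ 0 := fun h => hb0ne' (Subtype.ext h)
    have hFne : ((F : Set G)).Nonempty := ⟨b0, by exact_mod_cast hb0F⟩
    obtain ⟨b, hbF, hbmax0⟩ := Set.Finite.exists_maximalFor addOrderOf (F : Set G) hfin hFne
    have hbmax : ∀ c ∈ F, addOrderOf c ≤ addOrderOf b := by
      intro c hc
      rcases le_or_gt (addOrderOf c) (addOrderOf b) with h | h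
      · exact h
      · exact hbmax0 hc h.le
    have hbne : b ≠ 0 := by
      intro hb0
      have h1 := hbmax b0 hb0F
      rw [hb0, addOrderOf_zero] at h1
      obtain ⟨m, hm⟩ := hG b0
      have hpos : 0 < addOrderOf b0 := by rw [hm]; exact pow_pos hp.pos m
      have h2 : addOrderOf b0 = 1 := by omega
      exact hb0ne (AddMonoid.addOrderOf_eq_one_iff.mp h2)
    obtain ⟨k, hk⟩ := hG b
    -- ⟨b⟩ satisfies the divisibility-triviality hypothesis
    have hdisj : ∀ a : G, a ∈ AddSubgroup.zmultiples b → (∃ x : G, p ^ k • x = a) → a = 0 := by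
      intro a haC hax
      have haF : a ∈ F := (AddSubgroup.zmultiples_le.mpr hbF) haC
      obtain ⟨f, hfF, hf⟩ := hpure k a haF hax
      obtain ⟨j, hj⟩ := hG f
      have hjk : j ≤ k := by
        have := hbmax f hfF
        rw [hj, hk] at this
        exact (Nat.pow_le_pow_iff_right hp.one_lt).mp this
      have : addOrderOf f ∣ p ^ k := hj ▸ pow_dvd_pow p hjk
      rw [← hf, addOrderOf_dvd_iff_nsmul_eq_zero.mp this]
    obtain ⟨H0, hH0⟩ := cyclic_compl p k hp b hk hdisj
    set C : AddSubgroup G := AddSubgroup.zmultiples b with hC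
    have hCF : C ≤ F := AddSubgroup.zmultiples_le.mpr hbF
    have hCH0top : C ⊔ H0 = ⊤ := codisjoint_iff.mp hH0.codisjoint
    have hdisCH0 := hH0.disjoint
    -- the smaller subgroup inside H0
    set F2 : AddSubgroup ↥H0 := F.comap H0.subtype with hF2
    have hG2 : ∀ g : ↥H0, ∃ m : ℕ, addOrderOf g = p ^ m := by
      intro g
      obtain ⟨m, hm⟩ := hG (g : G)
      exact ⟨m, by rw [← addOrderOf_injective H0.subtype Subtype.val_injective g]; exact hm⟩
    have hfin2 : ((F2 : Set ↥H0)).Finite := by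
      have : (F2 : Set ↥H0) = Subtype.val ⁻¹' (F : Set G) := rfl
      rw [this]
      exact Set.Finite.preimage Subtype.val_injective.injOn hfin
    have hpure2 : ∀ m : ℕ, ∀ a ∈ F2, (∃ x : ↥H0, p ^ m • x = a) → ∃ c ∈ F2, p ^ m • c = a := by
      intro m a haF2 ⟨x, hx⟩
      have hxG : p ^ m • (x : G) = (a : G) := by
        rw [← hx]; rfl
      obtain ⟨f, hfF, hf⟩ := hpure m (a : G) haF2 ⟨x, hxG⟩
      have hfsup : f ∈ C ⊔ H0 := hCH0top ▸ AddSubgroup.mem_top f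
      rw [AddSubgroup.mem_sup] at hfsup
      obtain ⟨c, hcC, h, hhH0, hch⟩ := hfsup
      have hhF : h ∈ F := by
        have : h = f - c := by rw [← hch]; abel
        rw [this]; exact sub_mem hfF (hCF hcC)
      have hsplit : p ^ m • c = (a : G) - p ^ m • h := by
        rw [← hf, ← hch, smul_add]; abel
      have hcz : p ^ m • c = 0 := by
        refine AddSubgroup.disjoint_def.mp hdisCH0 (AddSubgroup.nsmul_mem _ hcC _) ?_
        rw [hsplit]
        exact sub_mem a.2 (AddSubgroup.nsmul_mem _ hhH0 _)
      have hah : (a : G) = p ^ m • h := by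
        exact sub_eq_zero.mp (hsplit.symm.trans hcz)
      refine ⟨⟨h, hhH0⟩, ?_, ?_⟩
      · exact hhF
      · exact Subtype.ext (by rw [hah]; rfl)
    have hbH0 : b ∉ H0 := by
      intro hbH0
      exact hbne (AddSubgroup.disjoint_def.mp hdisCH0 (AddSubgroup.mem_zmultiples b) hbH0)
    have hcard2 : Nat.card F2 ≤ n := by
      have himg : Subtype.val '' (F2 : Set ↥H0) ⊂ (F : Set G) := by
        constructor
        · rintro x ⟨y, hy, rfl⟩; exact hy
        · intro hsub
          obtain ⟨y, hy, hyb⟩ := hsub hbF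
          exact hbH0 (hyb ▸ y.2)
      have h1 : Nat.card F2 = (Subtype.val '' (F2 : Set ↥H0)).ncard := by
        rw [Set.ncard_image_of_injective _ Subtype.val_injective, ← Nat.card_coe_set_eq]
        rfl
      have h2 : (F : Set G).ncard = Nat.card F := (Nat.card_coe_set_eq _).symm
      have h3 := Set.ncard_lt_ncard himg hfin
      omega
    obtain ⟨H1', hH1'⟩ := ih hG2 F2 hcard2 hfin2 hpure2
    refine ⟨H1'.map H0.subtype, ?_, ?_⟩
    · rw [AddSubgroup.disjoint_def]
      intro x hxF hxH1
      obtain ⟨y, hy, rfl⟩ := hxH1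
      have hyF2 : y ∈ F2 := hxF
      have : y = 0 := AddSubgroup.disjoint_def.mp hH1'.disjoint hyF2 hy
      rw [this]; rfl
    · rw [codisjoint_iff, eq_top_iff]
      intro g _
      have hg : g ∈ C ⊔ H0 := hCH0top ▸ AddSubgroup.mem_top g
      rw [AddSubgroup.mem_sup] at hg
      obtain ⟨c, hcC, h, hhH0, hch⟩ := hg
      have hh : (⟨h, hhH0⟩ : ↥H0) ∈ F2 ⊔ H1' :=
        (codisjoint_iff.mp hH1'.codisjoint) ▸ AddSubgroup.mem_top _
      rw [AddSubgroup.mem_sup] at hh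
      obtain ⟨f2, hf2, h1, hh1, hfh⟩ := hh
      have hdec : g = (c + (f2 : G)) + (h1 : G) := by
        have : (f2 : G) + (h1 : G) = h := congrArg Subtype.val hfh
        rw [← hch, ← this]; abel
      rw [hdec, AddSubgroup.mem_sup]
      exact ⟨c + (f2 : G), add_mem (hCF hcC) hf2.out,
        (h1 : G), ⟨h1, hh1, rfl⟩, rfl⟩

/-- in an Abelian p-group with all elements of finite height, a finite
pure subgroup F is a direct summand, and any isomorphism between two finite pure
subgroups F ≅ F' extends to an automorphism of G when G = F ⊕ H = F' ⊕ H' with H ≅ H'. -/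
theorem stmt_11 (p : ℕ) (hp : p.Prime) (G : Type) [AddCommGroup G]
    (hG : ∀ g : G, ∃ n : ℕ, addOrderOf g = p ^ n)
    (hht : ∀ g : G, g ≠ 0 → ∃ n : ℕ, ¬ ∃ x : G, p ^ n • x = g)
    (F : AddSubgroup G) (hFfin : (F : Set G).Finite)
    (hFpure : ∀ n : ℕ, ∀ a ∈ F, (∃ x : G, p ^ n • x = a) → ∃ b ∈ F, p ^ n • b = a) :
    (∃ H : AddSubgroup G, IsCompl F H) ∧
      ∀ F' : AddSubgroup G, (F' : Set G).Finite →
        (∀ n : ℕ, ∀ a ∈ F', (∃ x : G, p ^ n • x = a) → ∃ b ∈ F', p ^ n • b = a) →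
        ∀ H H' : AddSubgroup G, IsCompl F H → IsCompl F' H' → Nonempty (H ≃+ H') →
          ∀ φ : F ≃+ F', ∃ e : G ≃+ G, ∀ x : F, e ↑x = ↑(φ x) := by
  constructor
  · exact summand p hp (Nat.card F) hG F le_rfl hFfin hFpure
  · rintro F' hF'fin hF'pure H H' hFH hF'H' ⟨ψ⟩ φ
    have hFHm : IsCompl (AddSubgroup.toIntSubmodule F) (AddSubgroup.toIntSubmodule H) :=
      AddSubgroup.toIntSubmodule.isCompl hFH
    have hF'H'm : IsCompl (AddSubgroup.toIntSubmodule F') (AddSubgroup.toIntSubmodule H') :=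
      AddSubgroup.toIntSubmodule.isCompl hF'H'
    let e1 := Submodule.prodEquivOfIsCompl _ _ hFHm
    let e2 := Submodule.prodEquivOfIsCompl _ _ hF'H'm
    let φ' : (AddSubgroup.toIntSubmodule F) ≃ₗ[ℤ] (AddSubgroup.toIntSubmodule F') :=
      φ.toIntLinearEquiv
    let ψ' : (AddSubgroup.toIntSubmodule H) ≃ₗ[ℤ] (AddSubgroup.toIntSubmodule H') :=
      ψ.toIntLinearEquiv
    refine ⟨(e1.symm.trans ((φ'.prodCongr ψ').trans e2)).toAddEquiv, ?_⟩
    intro x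
    show e2 ((φ'.prodCongr ψ') (e1.symm ↑x)) = ↑(φ x)
    have h1 : e1.symm ↑x = (x, 0) :=
      Submodule.prodEquivOfIsCompl_symm_apply_left _ _ hFHm x
    rw [h1]
    have h2 : (φ'.prodCongr ψ') (x, 0) = (φ x, 0) := by
      simp only [φ', ψ', LinearEquiv.prodCongr_apply]
      exact Prod.ext rfl (map_zero ψ.toIntLinearEquiv)
    refine (congrArg e2 h2).trans ?_
    show (φ x : G) + ((0 : AddSubgroup.toIntSubmodule H') : G) = ↑(φ x)
    simp
end

section
/- Let G be an Abelian p-group, D(G) its divisible part, and suppose H ≤ G satisfies: H ∩ D(G) = {0}, H is pure in G, and every element of G of order p lies in D(G) + H. Then G = D(G) ⊕ H. -/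
/-- The divisible part of an Abelian group: the largest divisible subgroup,
i.e. the join of all divisible subgroups. -/
def divisiblePart (G : Type) [AddCommGroup G] : AddSubgroup G :=
  sSup {D : AddSubgroup G | ∀ d ∈ D, ∀ n : ℕ, 0 < n → ∃ x ∈ D, n • x = d}

lemma divisiblePart_div (G : Type) [AddCommGroup G] :
    ∀ d ∈ divisiblePart G, ∀ n : ℕ, 0 < n → ∃ x ∈ divisiblePart G, n • x = d := by
  let T : AddSubgroup G :=
    { carrier := {g | ∀ n : ℕ, 0 < n → ∃ x ∈ divisiblePart G, n • x = g}
      zero_mem' := fun n _ => ⟨0, (divisiblePart G).zero_mem, by simp⟩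
      add_mem' := by
        rintro a b ha hb n hn
        obtain ⟨x, hx, hxa⟩ := ha n hn
        obtain ⟨y, hy, hyb⟩ := hb n hn
        exact ⟨x + y, add_mem hx hy, by rw [smul_add, hxa, hyb]⟩
      neg_mem' := by
        rintro a ha n hn
        obtain ⟨x, hx, hxa⟩ := ha n hn
        exact ⟨-x, neg_mem hx, by rw [smul_neg, hxa]⟩ }
  have hsub : divisiblePart G ≤ T := by
    apply sSup_le
    intro D hD d hd n hn
    obtain ⟨x, hx, hxd⟩ := hD d hd n hn
    exact ⟨x, le_sSup hD hx, hxd⟩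
  exact fun d hd n hn => hsub hd n hn

/-- if G is an Abelian p-group of length at most ω (the divisible part is
exactly the set of elements divisible by all p^n), H ≤ G is pure, H ∩ D(G) = 0, and every
element of order p lies in D(G) + H, then G = D(G) ⊕ H. -/
theorem stmt_15 (p : ℕ) (hp : p.Prime) (G : Type) [AddCommGroup G]
    (hG : ∀ g : G, ∃ n : ℕ, addOrderOf g = p ^ n)
    (hlen : ∀ g : G, g ∈ divisiblePart G ↔ ∀ n : ℕ, ∃ x : G, p ^ n • x = g)
    (H : AddSubgroup G)
    (hinter : H ⊓ divisiblePart G = ⊥)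
    (hpure : ∀ n : ℕ, ∀ a ∈ H, (∃ x : G, p ^ n • x = a) → ∃ b ∈ H, p ^ n • b = a)
    (horder : ∀ g : G, p • g = 0 → g ∈ divisiblePart G ⊔ H) :
    IsCompl (divisiblePart G) H := by
  constructor
  · rw [disjoint_iff, inf_comm]
    exact hinter
  · rw [codisjoint_iff_le_sup]
    have key : ∀ n : ℕ, ∀ g : G, p ^ n • g = 0 → g ∈ divisiblePart G ⊔ H := by
      intro n
      induction n with
      | zero =>
        intro g hg
        simp only [pow_zero, one_smul] at hg
        rw [hg]; exact zero_mem _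
      | succ n ih =>
        intro g hg
        have h1 : p • (p ^ n • g) = 0 := by
          rw [smul_smul, ← pow_succ']
          exact hg
        obtain ⟨d, hd, h, hh, hdh⟩ := (AddSubgroup.mem_sup).mp (horder _ h1)
        obtain ⟨d', hd', hd'd⟩ :=
          divisiblePart_div G d hd (p ^ n) (pow_pos hp.pos n)
        have hhh : ∃ x : G, p ^ n • x = h :=
          ⟨g - d', by rw [smul_sub, hd'd, ← hdh]; abel⟩
        obtain ⟨b, hb, hbh⟩ := hpure n h hh hhh
        have hz : p ^ n • (g - d' - b) = 0 := by
          rw [smul_sub, smul_sub, hd'd, hbh, ← hdh]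
          abel
        have hmem := ih _ hz
        have hg' : g = (g - d' - b) + (d' + b) := by abel
        rw [hg']
        exact add_mem hmem
          (add_mem (AddSubgroup.mem_sup_left hd') (AddSubgroup.mem_sup_right hb))
    intro g _
    obtain ⟨n, hn⟩ := hG g
    apply key n
    rw [← hn]
    exact addOrderOf_nsmul_eq_zero g
end
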